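/- arXiv:2208.05467 — 7 statements merged into one kernel-verified Lean document; each statement's English description precedes it below -/
import Mathlib

section
/- Let P ⊆ ℝⁿ and Q ⊆ ℝᵐ be pointed polyhedra and let π : ℝᵐ → ℝⁿ be a linear map with π(Q) = P. Then for every edge direction g of P there exists an edge direction f of Q such that π(f) = g. -/
open Matrix

noncomputable section

/-- The polyhedron `{x : Ax = b, Bx ≤ d}`. -/
def polySet {p q n : Type*} [Fintype n] (A : Matrix p n ℝ) (b : p → ℝ)
    (B : Matrix q n ℝ) (d : q → ℝ) : Set (n → ℝ) :=
  {x | A.mulVec x = b ∧ B.mulVec x ≤ d}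

/-- The circuits of the linear description `Ax = b, Bx ≤ d`: nonzero kernel elements `g` of `A`
whose support of `Bg` is inclusion-minimal among nonzero kernel elements. -/
def circuits {p q n : Type*} [Fintype n] (A : Matrix p n ℝ) (B : Matrix q n ℝ) :
    Set (n → ℝ) :=
  {g | A.mulVec g = 0 ∧ g ≠ 0 ∧
    ∀ y : n → ℝ, A.mulVec y = 0 → y ≠ 0 →
      {i | B.mulVec y i ≠ 0} ⊆ {i | B.mulVec g i ≠ 0} →
      {i | B.mulVec g i ≠ 0} ⊆ {i | B.mulVec y i ≠ 0}}

/-- A face of a polyhedron `P`: either `P` itself or the set of maximizers of a linear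
functional over `P` whose supremum is finite and attained. -/
def IsFace {n : Type*} [Fintype n] (P F : Set (n → ℝ)) : Prop :=
  F = P ∨ ∃ (c : n → ℝ) (s : ℝ),
    (∀ y ∈ P, c ⬝ᵥ y ≤ s) ∧ (∃ y ∈ P, c ⬝ᵥ y = s) ∧ F = {x ∈ P | c ⬝ᵥ x = s}

/-- The dimension of the affine span of a set. -/
def spanDim {n : Type*} [Fintype n] (S : Set (n → ℝ)) : ℕ :=
  Module.finrank ℝ (affineSpan ℝ S).direction

def IsVertex {n : Type*} [Fintype n] (P : Set (n → ℝ)) (v : n → ℝ) : Prop :=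
  IsFace P {v}

def IsEdge {n : Type*} [Fintype n] (P F : Set (n → ℝ)) : Prop :=
  IsFace P F ∧ spanDim F = 1

/-- A nonzero vector lying in the direction space of the affine span of some edge of `P`. -/
def IsEdgeDirection {n : Type*} [Fintype n] (P : Set (n → ℝ)) (g : n → ℝ) : Prop :=
  g ≠ 0 ∧ ∃ F, IsEdge P F ∧ g ∈ (affineSpan ℝ F).direction

/-- A facet: a face whose affine span has dimension `dim P - 1`. -/
def IsFacet {n : Type*} [Fintype n] (P F : Set (n → ℝ)) : Prop :=
  IsFace P F ∧ spanDim F + 1 = spanDim P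

/-- A pointed set: contains no affine line. -/
def PointedSet {n : Type*} [Fintype n] (P : Set (n → ℝ)) : Prop :=
  ∀ x v : n → ℝ, (∀ t : ℝ, x + t • v ∈ P) → v = 0

/-- `Ax = b, Bx ≤ d` is an irredundant description of `P`. -/
def Irredundant {p q n : Type*} [Fintype n] (A : Matrix p n ℝ) (b : p → ℝ)
    (B : Matrix q n ℝ) (d : q → ℝ) (P : Set (n → ℝ)) : Prop :=
  P = polySet A b B d ∧
  {x | A.mulVec x = b} = (affineSpan ℝ P : Set (n → ℝ)) ∧
  ∀ i, IsFacet P {x ∈ P | B.mulVec x i = d i}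

/-- A basic solution of the system `Ax = b, Bx ≤ d`: satisfies the equalities, and the rows of
`A` together with the tight rows of `B` span the whole space. -/
def IsBasicSolution {p q n : Type*} [Fintype n] (A : Matrix p n ℝ) (b : p → ℝ)
    (B : Matrix q n ℝ) (d : q → ℝ) (g : n → ℝ) : Prop :=
  A.mulVec g = b ∧
  Submodule.span ℝ (Set.range (fun i => A i) ∪
    (fun i => B i) '' {i | B.mulVec g i = d i}) = ⊤

lemma exists_dot_rep {m n : ℕ} (π : (Fin m → ℝ) →ₗ[ℝ] (Fin n → ℝ)) (c : Fin n → ℝ) :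
    ∃ c' : Fin m → ℝ, ∀ y, c' ⬝ᵥ y = c ⬝ᵥ π y := by
  classical
  refine ⟨fun j => c ⬝ᵥ π (fun i => if j = i then (1:ℝ) else 0), fun y => ?_⟩
  have h := LinearMap.pi_apply_eq_sum_univ π y
  rw [h]
  simp only [dotProduct, Finset.sum_apply, Pi.smul_apply, smul_eq_mul, Finset.mul_sum]
  rw [Finset.sum_comm]
  refine Finset.sum_congr rfl fun j _ => ?_
  rw [Finset.sum_mul]
  exact Finset.sum_congr rfl fun i _ => by ring

lemma sum_rows_dot {q m : ℕ} (B : Matrix (Fin q) (Fin m) ℝ) (T : Finset (Fin q)) (y : Fin m → ℝ) :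
    (∑ i ∈ T, B i) ⬝ᵥ y = ∑ i ∈ T, B.mulVec y i := by
  simp only [dotProduct, Matrix.mulVec, Finset.sum_apply, Finset.sum_mul]
  rw [Finset.sum_comm]
  refine Finset.sum_congr rfl fun x _ => ?_
  rw [Finset.sum_apply x T (fun i => B i), Finset.sum_mul]

set_option maxHeartbeats 2000000 in
/-- If `P`, `Q` are pointed polyhedra and `π` is a linear map with `π(Q) = P`,
then every edge direction of `P` is the image of an edge direction of `Q`. -/
theorem stmt_0 {n m p₁ q₁ p₂ q₂ : ℕ}
    (A₁ : Matrix (Fin p₁) (Fin n) ℝ) (b₁ : Fin p₁ → ℝ)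
    (B₁ : Matrix (Fin q₁) (Fin n) ℝ) (d₁ : Fin q₁ → ℝ)
    (A₂ : Matrix (Fin p₂) (Fin m) ℝ) (b₂ : Fin p₂ → ℝ)
    (B₂ : Matrix (Fin q₂) (Fin m) ℝ) (d₂ : Fin q₂ → ℝ)
    (P : Set (Fin n → ℝ)) (Q : Set (Fin m → ℝ))
    (hP : P = polySet A₁ b₁ B₁ d₁) (hQ : Q = polySet A₂ b₂ B₂ d₂)
    (hPpt : PointedSet P) (hQpt : PointedSet Q)
    (π : (Fin m → ℝ) →ₗ[ℝ] (Fin n → ℝ)) (hπ : π '' Q = P)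
    (g : Fin n → ℝ) (hg : IsEdgeDirection P g) :
    ∃ f : Fin m → ℝ, IsEdgeDirection Q f ∧ π f = g := by
  classical
  obtain ⟨hgne, F, ⟨hFface, hFdim⟩, hgdir⟩ := hg
  rw [direction_affineSpan] at hgdir
  have hFdim' : Module.finrank ℝ (vectorSpan ℝ F) = 1 := by
    rw [spanDim, direction_affineSpan] at hFdim; exact hFdim
  -- F is nonempty
  have hFne : F.Nonempty := by
    rw [Set.nonempty_iff_ne_empty]
    intro h
    rw [h, vectorSpan_empty] at hFdim'
    simp [finrank_bot] at hFdim'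
  -- uniform face form
  obtain ⟨c, s, hcle, hF⟩ :
      ∃ c s, (∀ x ∈ P, c ⬝ᵥ x ≤ s) ∧ F = {x ∈ P | c ⬝ᵥ x = s} := by
    rcases hFface with h | ⟨c, s, h1, _h2, h3⟩
    · refine ⟨0, 0, fun x _ => by simp, ?_⟩
      rw [h]; ext x; simp
    · exact ⟨c, s, h1, h3⟩
  have hFsubP : F ⊆ P := by rw [hF]; exact fun x hx => hx.1
  obtain ⟨c', hc'⟩ := exists_dot_rep π c
  -- vectorSpan F = span g
  have hFspan : vectorSpan ℝ F = Submodule.span ℝ {g} := by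
    symm
    refine Submodule.eq_of_le_of_finrank_le ?_ ?_
    · rw [Submodule.span_le, Set.singleton_subset_iff]; exact hgdir
    · rw [finrank_span_singleton hgne, hFdim']
  -- two distinct points of F
  obtain ⟨x₀, hx₀⟩ := hFne
  obtain ⟨x₁, hx₁, hx01⟩ : ∃ x₁ ∈ F, x₁ ≠ x₀ := by
    by_contra h
    push_neg at h
    have hsub : F ⊆ {x₀} := fun x hx => h x hx
    have := vectorSpan_mono ℝ hsub
    rw [vectorSpan_singleton] at this
    have := this hgdir
    simp at this
    exact hgne this
  -- facts about Q-membership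
  have hQmem : ∀ y ∈ Q, A₂.mulVec y = b₂ ∧ B₂.mulVec y ≤ d₂ := by
    intro y hy; rw [hQ] at hy; exact hy
  have hQmem' : ∀ y, A₂.mulVec y = b₂ → B₂.mulVec y ≤ d₂ → y ∈ Q := by
    intro y h1 h2; rw [hQ]; exact ⟨h1, h2⟩
  -- sup over Q
  have hsup : ∀ y ∈ Q, c' ⬝ᵥ y ≤ s := by
    intro y hy
    rw [hc']
    exact hcle _ (hπ ▸ ⟨y, hy, rfl⟩)
  -- image into F
  have hF'img : ∀ y, y ∈ Q → c' ⬝ᵥ y = s → π y ∈ F := by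
    intro y hyQ hys
    rw [hF]
    exact ⟨hπ ▸ ⟨y, hyQ, rfl⟩, by rw [← hc']; exact hys⟩
  -- preimages of points of F
  have hpre : ∀ x ∈ F, ∃ y, y ∈ Q ∧ c' ⬝ᵥ y = s ∧ π y = x := by
    intro x hx
    have hxP : x ∈ P := hFsubP hx
    rw [← hπ] at hxP
    obtain ⟨y, hyQ, hyx⟩ := hxP
    refine ⟨y, hyQ, ?_, hyx⟩
    rw [hc', hyx]
    rw [hF] at hx; exact hx.2
  -- tight-set subfaces
  set ET : Finset (Fin q₂) → Set (Fin m → ℝ) :=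
    fun T => {y | y ∈ Q ∧ c' ⬝ᵥ y = s ∧ ∀ i ∈ T, B₂.mulVec y i = d₂ i} with hET
  set 𝒯 : Set (Finset (Fin q₂)) := {T | ∃ a b, a ∈ ET T ∧ b ∈ ET T ∧ π a ≠ π b} with h𝒯
  have h𝒯ne : (∅ : Finset (Fin q₂)) ∈ 𝒯 := by
    obtain ⟨y₀, hy₀Q, hy₀s, hy₀x⟩ := hpre x₀ hx₀
    obtain ⟨y₁, hy₁Q, hy₁s, hy₁x⟩ := hpre x₁ hx₁
    exact ⟨y₁, y₀, ⟨hy₁Q, hy₁s, by simp⟩, ⟨hy₀Q, hy₀s, by simp⟩,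
      by rw [hy₀x, hy₁x]; exact hx01⟩
  obtain ⟨T, hT𝒯, hTmax⟩ := Set.Finite.exists_maximalFor Finset.card 𝒯 (Set.toFinite 𝒯)
    ⟨∅, h𝒯ne⟩
  obtain ⟨a, b, haE, hbE, hab⟩ := hT𝒯
  set E := ET T with hEdef
  set D := vectorSpan ℝ E with hD
  -- directions of E
  have hDprop : ∀ u ∈ D, A₂.mulVec u = 0 ∧ (∀ i ∈ T, B₂.mulVec u i = 0) ∧
      π u ∈ Submodule.span ℝ {g} := by
    have hgen : D ≤ LinearMap.ker (A₂.mulVecLin) ⊓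
        ((⨅ i ∈ T, LinearMap.ker ((LinearMap.proj i).comp B₂.mulVecLin)) ⊓
          Submodule.comap π (Submodule.span ℝ {g})) := by
      rw [hD, vectorSpan_def, Submodule.span_le]
      rintro u hu
      rw [Set.mem_vsub] at hu
      obtain ⟨y, hy, z, hz, rfl⟩ := hu
      obtain ⟨hyQ, hys, hyT⟩ := hy
      obtain ⟨hzQ, hzs, hzT⟩ := hz
      obtain ⟨hyA, hyB⟩ := hQmem y hyQ
      obtain ⟨hzA, hzB⟩ := hQmem z hzQ
      rw [vsub_eq_sub]
      refine Submodule.mem_inf.mpr ⟨?_, Submodule.mem_inf.mpr ⟨?_, ?_⟩⟩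
      · rw [LinearMap.mem_ker, Matrix.mulVecLin_apply, mulVec_sub, hyA, hzA,
          sub_self]
      · rw [Submodule.mem_iInf]
        intro i
        rw [Submodule.mem_iInf]
        intro hi
        rw [LinearMap.mem_ker, LinearMap.comp_apply, Matrix.mulVecLin_apply,
          LinearMap.proj_apply, mulVec_sub]
        simp only [Pi.sub_apply]
        rw [hyT i hi, hzT i hi, sub_self]
      · rw [Submodule.mem_comap, map_sub, ← hFspan]
        have h1 : π y ∈ F := hF'img y hyQ hys
        have h2 : π z ∈ F := hF'img z hzQ hzs
        have h3 := vsub_mem_vectorSpan ℝ h1 h2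
        rwa [vsub_eq_sub] at h3
    intro u hu
    have h := hgen hu
    rw [Submodule.mem_inf, Submodule.mem_inf] at h
    obtain ⟨h1, h2, h3⟩ := h
    refine ⟨?_, ?_, h3⟩
    · rw [LinearMap.mem_ker, Matrix.mulVecLin_apply] at h1; exact h1
    · intro i hi
      rw [Submodule.mem_iInf] at h2
      have h4 := h2 i
      rw [Submodule.mem_iInf] at h4
      have h5 := h4 hi
      rw [LinearMap.mem_ker] at h5
      simpa using h5
  have hbaD : b - a ∈ D := by
    have h := vsub_mem_vectorSpan ℝ hbE haE
    rwa [vsub_eq_sub] at h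
  have hπba : π (b - a) ≠ 0 := by
    rw [map_sub, sub_ne_zero]; exact Ne.symm hab
  have hbane : b - a ≠ 0 := fun h => hπba (by rw [h, map_zero])
  have hfin1 : 1 ≤ Module.finrank ℝ D := by
    have hnt : Nontrivial D :=
      ⟨⟨⟨b - a, hbaD⟩, 0, by simp [Submodule.mk_eq_zero, hbane]⟩⟩
    have := Module.finrank_pos_iff (R := ℝ) |>.mpr hnt
    omega
  have hfin2 : Module.finrank ℝ D ≤ 1 := by
    by_contra hcon
    push_neg at hcon
    -- a kernel direction inside D
    set ρ : D →ₗ[ℝ] (Fin n → ℝ) := π.comp D.subtype with hρ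
    have hrange : LinearMap.range ρ ≤ Submodule.span ℝ {g} := by
      rintro x ⟨u, rfl⟩
      exact (hDprop u.1 u.2).2.2
    have hrk : Module.finrank ℝ (LinearMap.range ρ) ≤ 1 := by
      have h := Submodule.finrank_mono hrange
      rwa [finrank_span_singleton hgne] at h
    have hrn := LinearMap.finrank_range_add_finrank_ker ρ
    have hkerpos : 0 < Module.finrank ℝ (LinearMap.ker ρ) := by omega
    have hker_nt : Nontrivial (LinearMap.ker ρ) :=
      Module.finrank_pos_iff (R := ℝ) |>.mp hkerpos
    obtain ⟨vb, hvb⟩ := exists_ne (0 : LinearMap.ker ρ)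
    set v : Fin m → ℝ := ((vb : D) : Fin m → ℝ) with hvdef
    have hvD : v ∈ D := (vb : D).2
    have hπv : π v = 0 := LinearMap.mem_ker.mp vb.2
    have hvne : v ≠ 0 := by
      intro h
      apply hvb
      have h1 : (vb : D) = 0 := Subtype.ext h
      exact Subtype.ext h1
    obtain ⟨hA₂v, hTv, -⟩ := hDprop v hvD
    obtain ⟨haQ, has, haT⟩ := haE
    obtain ⟨hbQ, hbs, hbT⟩ := hbE
    have hBvne : ∃ i, B₂.mulVec v i ≠ 0 := by
      by_contra h
      push_neg at h
      have hBv : B₂.mulVec v = 0 := funext h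
      have hline : ∀ t : ℝ, a + t • v ∈ Q := by
        intro t
        refine hQmem' _ ?_ ?_
        · rw [mulVec_add, mulVec_smul, hA₂v, smul_zero, add_zero, (hQmem a haQ).1]
        · rw [mulVec_add, mulVec_smul, hBv, smul_zero, add_zero]
          exact (hQmem a haQ).2
      exact hvne (hQpt a v hline)
    obtain ⟨i₀, hi₀⟩ := hBvne
    set ε : ℝ := if 0 < B₂.mulVec v i₀ then 1 else -1 with hε
    set w : Fin m → ℝ := ε • v with hw
    have hA₂w : A₂.mulVec w = 0 := by rw [hw, mulVec_smul, hA₂v, smul_zero]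
    have hπw : π w = 0 := by rw [hw, _root_.map_smul, hπv, smul_zero]
    have hTw : ∀ i ∈ T, B₂.mulVec w i = 0 := by
      intro i hi
      rw [hw, mulVec_smul]
      simp [hTv i hi]
    have hwpos : ∃ i, 0 < B₂.mulVec w i := by
      refine ⟨i₀, ?_⟩
      rw [hw, mulVec_smul]
      simp only [Pi.smul_apply, smul_eq_mul, hε]
      split_ifs with hpos
      · simpa using hpos
      · have hneg : B₂.mulVec v i₀ < 0 := lt_of_le_of_ne (not_lt.mp hpos) hi₀
        nlinarith
    set S : Finset (Fin q₂) := Finset.univ.filter (fun i => 0 < B₂.mulVec w i) with hS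
    have hSne : S.Nonempty := by
      obtain ⟨i, hi⟩ := hwpos
      exact ⟨i, by simp [hS, hi]⟩
    have hSmem : ∀ i ∈ S, 0 < B₂.mulVec w i := by
      intro i hi
      simpa [hS] using hi
    have hSnotT : ∀ i ∈ S, i ∉ T := by
      intro i hi hiT
      have h1 := hTw i hiT
      have h2 := hSmem i hi
      linarith
    set r : ℕ → ℝ := fun k => 1 / (k + 2) with hr
    have hrpos : ∀ k, 0 < r k := fun k => by positivity
    have hrle1 : ∀ k, r k ≤ 1 := by
      intro k
      rw [hr]
      simp only
      rw [div_le_one (by positivity)]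
      have : (0:ℝ) ≤ k := Nat.cast_nonneg k
      linarith
    have hrinj : Function.Injective r := by
      intro k₁ k₂ h
      simp only [hr] at h
      rw [div_eq_div_iff (by positivity) (by positivity)] at h
      have h2 : (k₁:ℝ) = k₂ := by linarith
      exact_mod_cast h2
    set zf : ℕ → (Fin m → ℝ) := fun k => a + r k • (b - a) with hzf
    have hbaA : A₂.mulVec (b - a) = 0 := (hDprop _ hbaD).1
    have hbaT : ∀ i ∈ T, B₂.mulVec (b - a) i = 0 := (hDprop _ hbaD).2.1
    have hbac : c' ⬝ᵥ (b - a) = 0 := by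
      rw [dotProduct_sub, hbs, has, sub_self]
    have hzQ : ∀ k, zf k ∈ Q := by
      intro k
      refine hQmem' _ ?_ ?_
      · rw [hzf]
        simp only
        rw [mulVec_add, mulVec_smul, hbaA, smul_zero, add_zero, (hQmem a haQ).1]
      · intro i
        have h1 : B₂.mulVec a i ≤ d₂ i := (hQmem a haQ).2 i
        have h2 : B₂.mulVec b i ≤ d₂ i := (hQmem b hbQ).2 i
        have h3 : B₂.mulVec (zf k) i
            = (1 - r k) * B₂.mulVec a i + r k * B₂.mulVec b i := by
          rw [hzf]
          simp only [mulVec_add, mulVec_smul, mulVec_sub, Pi.add_apply,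
            Pi.smul_apply, Pi.sub_apply, smul_eq_mul]
          ring
        rw [h3]
        nlinarith [hrpos k, hrle1 k]
    have hzE : ∀ k, zf k ∈ E := by
      intro k
      refine ⟨hzQ k, ?_, ?_⟩
      · rw [hzf]
        simp only
        rw [dotProduct_add, dotProduct_smul, hbac, smul_zero, add_zero, has]
      · intro i hi
        rw [hzf]
        simp only [mulVec_add, mulVec_smul, Pi.add_apply, Pi.smul_apply, smul_eq_mul]
        rw [hbaT i hi, haT i hi, mul_zero, add_zero]
    set tt : ℕ → ℝ :=
      fun k => S.inf' hSne (fun i => (d₂ i - B₂.mulVec (zf k) i) / B₂.mulVec w i) with htt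
    have hchoice : ∀ k, ∃ i ∈ S,
        tt k = (d₂ i - B₂.mulVec (zf k) i) / B₂.mulVec w i :=
      fun k => Finset.exists_mem_eq_inf' hSne _
    choose idx hidxS hidxEq using hchoice
    have htt0 : ∀ k, 0 ≤ tt k := by
      intro k
      apply Finset.le_inf'
      intro i hi
      have h1 : B₂.mulVec (zf k) i ≤ d₂ i := (hQmem _ (hzQ k)).2 i
      exact div_nonneg (by linarith) (hSmem i hi).le
    set yf : ℕ → (Fin m → ℝ) := fun k => zf k + tt k • w with hyf
    have hform : ∀ k i, B₂.mulVec (yf k) i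
        = B₂.mulVec (zf k) i + tt k * B₂.mulVec w i := by
      intro k i
      rw [hyf]
      simp [mulVec_add, mulVec_smul]
    have hyQ : ∀ k, yf k ∈ Q := by
      intro k
      refine hQmem' _ ?_ ?_
      · rw [hyf]
        simp only
        rw [mulVec_add, mulVec_smul, hA₂w, smul_zero, add_zero, (hQmem _ (hzQ k)).1]
      · intro i
        have hzi : B₂.mulVec (zf k) i ≤ d₂ i := (hQmem _ (hzQ k)).2 i
        rw [hform k i]
        by_cases hiS : i ∈ S
        · have hpos := hSmem i hiS
          have hle : tt k ≤ (d₂ i - B₂.mulVec (zf k) i) / B₂.mulVec w i :=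
            Finset.inf'_le _ hiS
          have h5 := (le_div_iff₀ hpos).mp hle
          linarith
        · have hnp : B₂.mulVec w i ≤ 0 := by
            by_contra hh
            push_neg at hh
            exact hiS (by simp [hS, hh])
          nlinarith [htt0 k]
    have hyE : ∀ k, yf k ∈ ET (insert (idx k) T) := by
      intro k
      refine ⟨hyQ k, ?_, ?_⟩
      · have hcw : c' ⬝ᵥ w = 0 := by rw [hc', hπw, dotProduct_zero]
        rw [hyf]
        simp only
        rw [dotProduct_add, dotProduct_smul, hcw, smul_zero, add_zero]
        exact (hzE k).2.1
      · intro i hi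
        rcases Finset.mem_insert.mp hi with h | h
        · subst h
          rw [hform k _, hidxEq k]
          have hpos := hSmem _ (hidxS k)
          rw [div_mul_cancel₀ _ (ne_of_gt hpos)]
          ring
        · rw [hform k i, hTw i h, (hzE k).2.2 i h, mul_zero, add_zero]
    have hπy : ∀ k, π (yf k) = π a + r k • (π b - π a) := by
      intro k
      rw [hyf]
      simp only
      rw [map_add, _root_.map_smul, hπw, smul_zero, add_zero, hzf]
      simp only
      rw [map_add, _root_.map_smul, map_sub]
    obtain ⟨k₁, k₂, hkne, hkeq⟩ := Finite.exists_ne_map_eq_of_infinite idx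
    have hT' : insert (idx k₁) T ∈ 𝒯 := by
      refine ⟨yf k₁, yf k₂, hyE k₁, hkeq ▸ hyE k₂, ?_⟩
      rw [hπy k₁, hπy k₂]
      intro hc
      have h1 : r k₁ • (π b - π a) = r k₂ • (π b - π a) := by
        exact add_left_cancel hc
      have h2 : (r k₁ - r k₂) • (π b - π a) = 0 := by
        rw [sub_smul, h1, sub_self]
      rcases smul_eq_zero.mp h2 with h | h
      · exact hkne (hrinj (by linarith [sub_eq_zero.mp h]))
      · exact hab (sub_eq_zero.mp h).symm
    have hcard := hTmax hT' (Finset.card_le_card (Finset.subset_insert _ _))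
    have hnotT : idx k₁ ∉ T := hSnotT _ (hidxS k₁)
    rw [Finset.card_insert_of_notMem hnotT] at hcard
    omega
  -- E is a face of Q
  have hEeq : E = {y ∈ Q | (c' + ∑ i ∈ T, B₂ i) ⬝ᵥ y = s + ∑ i ∈ T, d₂ i} := by
    ext y
    simp only [hEdef, hET, Set.mem_setOf_eq, add_dotProduct, sum_rows_dot]
    constructor
    · rintro ⟨hyQ, hys, hyT⟩
      refine ⟨hyQ, ?_⟩
      rw [hys, Finset.sum_congr rfl hyT]
    · rintro ⟨hyQ, hy⟩
      have h1 : c' ⬝ᵥ y ≤ s := hsup y hyQ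
      have h2 : ∀ i ∈ T, B₂.mulVec y i ≤ d₂ i := fun i _ => (hQmem y hyQ).2 i
      have h3 : ∑ i ∈ T, B₂.mulVec y i ≤ ∑ i ∈ T, d₂ i := Finset.sum_le_sum h2
      have hcs : c' ⬝ᵥ y = s := by linarith
      refine ⟨hyQ, hcs, ?_⟩
      have h4 : ∑ i ∈ T, (d₂ i - B₂.mulVec y i) = 0 := by
        rw [Finset.sum_sub_distrib]; linarith
      intro i hi
      have h5 := (Finset.sum_eq_zero_iff_of_nonneg
        (fun i hi => sub_nonneg.mpr (h2 i hi))).mp h4 i hi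
      linarith
  have hEface : IsFace Q E := by
    refine Or.inr ⟨c' + ∑ i ∈ T, B₂ i, s + ∑ i ∈ T, d₂ i, ?_, ?_, hEeq⟩
    · intro y hy
      rw [add_dotProduct, sum_rows_dot]
      have h1 := Finset.sum_le_sum (fun i (_ : i ∈ T) => (hQmem y hy).2 i)
      have h2 := hsup y hy
      linarith
    · refine ⟨a, haE.1, ?_⟩
      have h := hEeq ▸ haE
      exact h.2
  -- conclude
  obtain ⟨β, hβ⟩ := Submodule.mem_span_singleton.mp ((hDprop _ hbaD).2.2)
  have hβne : β ≠ 0 := by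
    intro h; rw [h, zero_smul] at hβ; exact hπba hβ.symm
  refine ⟨β⁻¹ • (b - a), ⟨?_, E, ⟨hEface, ?_⟩, ?_⟩, ?_⟩
  · intro h
    have h2 : π (β⁻¹ • (b - a)) = 0 := by rw [h, map_zero]
    rw [_root_.map_smul] at h2
    exact hπba (by simpa [hβne] using h2)
  · rw [spanDim, direction_affineSpan, ← hD]
    exact le_antisymm hfin2 hfin1
  · rw [direction_affineSpan]
    exact Submodule.smul_mem _ _ hbaD
  · rw [_root_.map_smul, ← hβ, smul_smul, inv_mul_cancel₀ hβne, one_smul]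
end
end

section
/- Let P = {x ∈ ℝⁿ : Ax = b, Bx ≤ d} be a nonempty polyhedron with B ∈ ℝ^{m×n} and ker(A) ∩ ker(B) = {0}, and define the affine map σ : ℝⁿ → ℝᵐ by σ(x) = d − Bx. Then: (i) σ(P) = aff(σ(P)) ∩ ℝᵐ_{≥0}, where aff denotes the affine hull; and (ii) the set {Bg : g ∈ C(A,B)} equals the set of all nonzero vectors s of the subspace {By : y ∈ ker(A)} whose support supp(s) = {i : s_i ≠ 0} is inclusion-minimal among the supports of nonzero vectors of that subspace. -/
open Matrix

noncomputable section

/-- For a nonempty pointed polyhedron `P = {x : Ax = b, Bx ≤ d}` and the slack map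
`σ(x) = d - Bx`: (i) `σ(P)` equals the intersection of its affine hull with the nonnegative
orthant; (ii) `{Bg : g ∈ C(A,B)}` is exactly the set of nonzero support-minimal vectors of the
subspace `{By : y ∈ ker A}`. -/
theorem stmt_3 {p m n : ℕ}
    (A : Matrix (Fin p) (Fin n) ℝ) (b : Fin p → ℝ)
    (B : Matrix (Fin m) (Fin n) ℝ) (d : Fin m → ℝ)
    (hne : (polySet A b B d).Nonempty)
    (hpt : ∀ v : Fin n → ℝ, A.mulVec v = 0 → B.mulVec v = 0 → v = 0) :
    ((fun x => d - B.mulVec x) '' polySet A b B d =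
      (affineSpan ℝ ((fun x => d - B.mulVec x) '' polySet A b B d) : Set (Fin m → ℝ)) ∩
        {s | 0 ≤ s}) ∧
    ((fun g => B.mulVec g) '' circuits A B =
      {s : Fin m → ℝ | (∃ y, A.mulVec y = 0 ∧ s = B.mulVec y) ∧ s ≠ 0 ∧
        ∀ s' : Fin m → ℝ, (∃ y, A.mulVec y = 0 ∧ s' = B.mulVec y) → s' ≠ 0 →
          {i | s' i ≠ 0} ⊆ {i | s i ≠ 0} → {i | s i ≠ 0} ⊆ {i | s' i ≠ 0}}) := by
  
  constructor
  · -- Part (i)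
    have hlin : ∀ (x v : Fin n → ℝ),
        d - B.mulVec (v +ᵥ x) = (-B.mulVecLin) v +ᵥ (d - B.mulVec x) := by
      intro x v
      funext i
      simp only [vadd_eq_add, Matrix.mulVec_add, Matrix.mulVecLin_apply, Pi.add_apply,
        Pi.sub_apply, Pi.neg_apply, LinearMap.neg_apply]
      ring
    let f : (Fin n → ℝ) →ᵃ[ℝ] (Fin m → ℝ) :=
      { toFun := fun x => d - B.mulVec x
        linear := -B.mulVecLin
        map_vadd' := fun x v => hlin x v }
    let S : AffineSubspace ℝ (Fin n → ℝ) :=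
      { carrier := {x | A.mulVec x = b}
        smul_vsub_vadd_mem' := by
          intro t p₁ p₂ p₃ h₁ h₂ h₃
          simp only [Set.mem_setOf_eq] at *
          simp [Matrix.mulVec_add, Matrix.mulVec_sub, Matrix.mulVec_smul, vsub_eq_sub,
            vadd_eq_add, h₁, h₂, h₃] }
    have hspan : affineSpan ℝ (polySet A b B d) ≤ S :=
      affineSpan_le.2 (fun x hx => hx.1)
    apply Set.Subset.antisymm
    · rintro s ⟨x, hx, rfl⟩
      refine ⟨subset_affineSpan ℝ _ ⟨x, hx, rfl⟩, ?_⟩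
      intro i
      simpa using hx.2 i
    · rintro s ⟨hs1, hs2⟩
      have himg : (fun x => d - B.mulVec x) '' polySet A b B d = f '' polySet A b B d := rfl
      rw [himg, ← AffineSubspace.map_span] at hs1
      obtain ⟨x, hx, rfl⟩ := hs1
      have hAx : A.mulVec x = b := hspan hx
      have hBx : B.mulVec x ≤ d := by
        intro i
        have h2 : 0 ≤ d i - B.mulVec x i := hs2 i
        simp only [Pi.sub_apply] at h2 ⊢
        linarith
      exact ⟨x, ⟨hAx, hBx⟩, rfl⟩
  · -- Part (ii)
    ext s
    constructor
    · rintro ⟨g, ⟨hAg, hg0, hmin⟩, rfl⟩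
      refine ⟨⟨g, hAg, rfl⟩, ?_, ?_⟩
      · intro h
        exact hg0 (hpt g hAg h)
      · rintro s' ⟨y, hAy, rfl⟩ hs' hsub
        have hy : y ≠ 0 := by
          intro h
          apply hs'
          rw [h, Matrix.mulVec_zero]
        exact hmin y hAy hy hsub
    · rintro ⟨⟨y, hAy, rfl⟩, hs0, hmin⟩
      refine ⟨y, ⟨hAy, ?_, ?_⟩, rfl⟩
      · intro h
        apply hs0
        rw [h, Matrix.mulVec_zero]
      · intro y' hAy' hy'0 hsub
        have hBy' : B.mulVec y' ≠ 0 := fun h => hy'0 (hpt y' hAy' h)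
        exact hmin (B.mulVec y') ⟨y', hAy', rfl⟩ hBy' hsub
end
end

section
/- Let P₁ = {x ∈ ℝ^{n₁} : A⁽¹⁾x = b⁽¹⁾, B⁽¹⁾x ≤ d⁽¹⁾} and P₂ = {x ∈ ℝ^{n₂} : A⁽²⁾x = b⁽²⁾, B⁽²⁾x ≤ d⁽²⁾} be pointed polyhedra (ker(A⁽ⁱ⁾) ∩ ker(B⁽ⁱ⁾) = {0} for i = 1,2), and consider the block description of P₁ × P₂ ⊆ ℝ^{n₁+n₂} given by A⁽¹⁾x⁽¹⁾ = b⁽¹⁾, A⁽²⁾x⁽²⁾ = b⁽²⁾, B⁽¹⁾x⁽¹⁾ ≤ d⁽¹⁾, B⁽²⁾x⁽²⁾ ≤ d⁽²⁾. Then the circuits of this block description are exactly (C(A⁽¹⁾,B⁽¹⁾) × {0}) ∪ ({0} × C(A⁽²⁾,B⁽²⁾)), i.e., C(P₁ × P₂) = (C(P₁) × {0}) ∪ ({0} × C(P₂)). -/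
open Matrix

noncomputable section

lemma sum_elim_eq_zero {α β : Type*} {f : α → ℝ} {g : β → ℝ} :
    Sum.elim f g = 0 ↔ f = 0 ∧ g = 0 := by
  constructor
  · intro h
    exact ⟨funext fun i => congrFun h (Sum.inl i), funext fun i => congrFun h (Sum.inr i)⟩
  · rintro ⟨rfl, rfl⟩
    funext i; cases i <;> rfl

lemma block_mulVec {p₁ n₁ p₂ n₂ : ℕ} (A₁ : Matrix (Fin p₁) (Fin n₁) ℝ)
    (A₂ : Matrix (Fin p₂) (Fin n₂) ℝ) (z : Fin n₁ ⊕ Fin n₂ → ℝ) :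
    (Matrix.fromBlocks A₁ 0 0 A₂).mulVec z =
      Sum.elim (A₁.mulVec (z ∘ Sum.inl)) (A₂.mulVec (z ∘ Sum.inr)) := by
  conv_lhs => rw [← Sum.elim_comp_inl_inr z]
  rw [Matrix.fromBlocks_mulVec]
  simp

/-- For pointed polyhedra `P₁`, `P₂`, the circuits of the block description of
`P₁ × P₂` are exactly `(C(P₁) × {0}) ∪ ({0} × C(P₂))`. -/
theorem stmt_4 {p₁ q₁ n₁ p₂ q₂ n₂ : ℕ}
    (A₁ : Matrix (Fin p₁) (Fin n₁) ℝ) (b₁ : Fin p₁ → ℝ)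
    (B₁ : Matrix (Fin q₁) (Fin n₁) ℝ) (d₁ : Fin q₁ → ℝ)
    (A₂ : Matrix (Fin p₂) (Fin n₂) ℝ) (b₂ : Fin p₂ → ℝ)
    (B₂ : Matrix (Fin q₂) (Fin n₂) ℝ) (d₂ : Fin q₂ → ℝ)
    (h₁ : ∀ v : Fin n₁ → ℝ, A₁.mulVec v = 0 → B₁.mulVec v = 0 → v = 0)
    (h₂ : ∀ v : Fin n₂ → ℝ, A₂.mulVec v = 0 → B₂.mulVec v = 0 → v = 0) :
    circuits (Matrix.fromBlocks A₁ 0 0 A₂) (Matrix.fromBlocks B₁ 0 0 B₂) =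
      {z : Fin n₁ ⊕ Fin n₂ → ℝ |
        (∃ g ∈ circuits A₁ B₁, z = Sum.elim g (0 : Fin n₂ → ℝ)) ∨
        (∃ g ∈ circuits A₂ B₂, z = Sum.elim (0 : Fin n₁ → ℝ) g)} := by
  ext z
  simp only [circuits, Set.mem_setOf_eq]
  constructor
  · rintro ⟨hA, hz, hmin⟩
    rw [block_mulVec] at hA
    obtain ⟨hA1, hA2⟩ := sum_elim_eq_zero.mp hA
    have hzsplit : z = Sum.elim (z ∘ Sum.inl) (z ∘ Sum.inr) := (Sum.elim_comp_inl_inr z).symm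
    by_cases hy : z ∘ Sum.inr = 0
    · left
      have hxne : z ∘ Sum.inl ≠ 0 := by
        intro h0
        exact hz (by rw [hzsplit, h0, hy]; exact sum_elim_eq_zero.mpr ⟨rfl, rfl⟩)
      refine ⟨z ∘ Sum.inl, ⟨hA1, hxne, ?_⟩, by funext i; cases i with | inl j => rfl | inr j => exact congrFun hy j⟩
      intro u hAu hune hsupp
      have hkey := hmin (Sum.elim u 0) ?_ ?_ ?_
      · intro j hj
        have := hkey (a := Sum.inl j) (by simp [block_mulVec]; exact hj)
        simpa [block_mulVec] using this
      · rw [block_mulVec]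
        exact sum_elim_eq_zero.mpr ⟨by simpa using hAu, by simp⟩
      · intro h0
        exact hune (funext fun i => congrFun h0 (Sum.inl i))
      · intro i hi
        rcases i with j | j
        · simp only [Set.mem_setOf_eq, block_mulVec, Sum.elim_comp_inl, Sum.elim_inl] at hi ⊢
          exact hsupp hi
        · exfalso
          simp [block_mulVec] at hi
    · right
      -- first show z ∘ Sum.inl = 0
      have hB1 : B₁.mulVec (z ∘ Sum.inl) = 0 := by
        have hkey := hmin (Sum.elim 0 (z ∘ Sum.inr)) ?_ ?_ ?_
        · funext j
          show (B₁ *ᵥ (z ∘ Sum.inl)) j = 0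
          by_contra hj
          have := hkey (a := Sum.inl j) (by simp [block_mulVec]; exact hj)
          simp [block_mulVec] at this
        · rw [block_mulVec]
          exact sum_elim_eq_zero.mpr ⟨by simp, by simpa using hA2⟩
        · intro h0
          exact hy (funext fun i => congrFun h0 (Sum.inr i))
        · intro i hi
          rcases i with j | j
          · exfalso
            simp [block_mulVec] at hi
          · simp only [Set.mem_setOf_eq, block_mulVec, Sum.elim_comp_inr, Sum.elim_inr] at hi ⊢
            exact hi
      have hx0 : z ∘ Sum.inl = 0 := h₁ _ hA1 hB1
      refine ⟨z ∘ Sum.inr, ⟨hA2, hy, ?_⟩, by funext i; cases i with | inl j => exact congrFun hx0 j | inr j => rfl⟩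
      intro u hAu hune hsupp
      have hkey := hmin (Sum.elim 0 u) ?_ ?_ ?_
      · intro j hj
        have := hkey (a := Sum.inr j) (by simp [block_mulVec]; exact hj)
        simpa [block_mulVec] using this
      · rw [block_mulVec]
        exact sum_elim_eq_zero.mpr ⟨by simp, by simpa using hAu⟩
      · intro h0
        exact hune (funext fun i => congrFun h0 (Sum.inr i))
      · intro i hi
        rcases i with j | j
        · exfalso
          simp [block_mulVec] at hi
        · simp only [Set.mem_setOf_eq, block_mulVec, Sum.elim_comp_inr, Sum.elim_inr] at hi ⊢
          exact hsupp hi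
  · rintro (⟨g, ⟨hAg, hgne, hgmin⟩, rfl⟩ | ⟨g, ⟨hAg, hgne, hgmin⟩, rfl⟩)
    · refine ⟨?_, ?_, ?_⟩
      · rw [block_mulVec]
        exact sum_elim_eq_zero.mpr ⟨by simpa using hAg, by simp⟩
      · intro h0
        exact hgne (sum_elim_eq_zero.mp h0).1
      · intro w hAw hwne hsupp
        rw [block_mulVec] at hAw
        obtain ⟨hAu, hAv⟩ := sum_elim_eq_zero.mp hAw
        have hBv : B₂.mulVec (w ∘ Sum.inr) = 0 := by
          funext j
          show (B₂ *ᵥ (w ∘ Sum.inr)) j = 0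
          by_contra hj
          have := hsupp (a := Sum.inr j) (by simp [block_mulVec]; exact hj)
          simp [block_mulVec] at this
        have hv0 : w ∘ Sum.inr = 0 := h₂ _ hAv hBv
        have hune : w ∘ Sum.inl ≠ 0 := by
          intro h0
          apply hwne
          rw [← Sum.elim_comp_inl_inr w, h0, hv0]
          exact sum_elim_eq_zero.mpr ⟨rfl, rfl⟩
        have hkey := hgmin (w ∘ Sum.inl) hAu hune ?_
        · intro i hi
          rcases i with j | j
          · simp only [Set.mem_setOf_eq, block_mulVec, Sum.elim_comp_inl, Sum.elim_inl] at hi ⊢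
            exact hkey hi
          · exfalso
            simp [block_mulVec] at hi
        · intro j hj
          have := hsupp (a := Sum.inl j) (by simp [block_mulVec]; exact hj)
          simpa [block_mulVec] using this
    · refine ⟨?_, ?_, ?_⟩
      · rw [block_mulVec]
        exact sum_elim_eq_zero.mpr ⟨by simp, by simpa using hAg⟩
      · intro h0
        exact hgne (sum_elim_eq_zero.mp h0).2
      · intro w hAw hwne hsupp
        rw [block_mulVec] at hAw
        obtain ⟨hAu, hAv⟩ := sum_elim_eq_zero.mp hAw
        have hBu : B₁.mulVec (w ∘ Sum.inl) = 0 := by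
          funext j
          show (B₁ *ᵥ (w ∘ Sum.inl)) j = 0
          by_contra hj
          have := hsupp (a := Sum.inl j) (by simp [block_mulVec]; exact hj)
          simp [block_mulVec] at this
        have hu0 : w ∘ Sum.inl = 0 := h₁ _ hAu hBu
        have hvne : w ∘ Sum.inr ≠ 0 := by
          intro h0
          apply hwne
          rw [← Sum.elim_comp_inl_inr w, h0, hu0]
          exact sum_elim_eq_zero.mpr ⟨rfl, rfl⟩
        have hkey := hgmin (w ∘ Sum.inr) hAv hvne ?_
        · intro i hi
          rcases i with j | j
          · exfalso
            simp [block_mulVec] at hi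
          · simp only [Set.mem_setOf_eq, block_mulVec, Sum.elim_comp_inr, Sum.elim_inr] at hi ⊢
            exact hkey hi
        · intro j hj
          have := hsupp (a := Sum.inr j) (by simp [block_mulVec]; exact hj)
          simpa [block_mulVec] using this
end
end

section
/- For every n ≥ 3 there exist m ∈ ℕ, pointed polyhedra P ⊂ ℝⁿ and Q ⊂ ℝᵐ, each equipped with an irredundant description, and a linear map π : ℝᵐ → ℝⁿ with π(Q) = P, such that C(P) contains at least 2^{n−1} pairwise non-parallel vectors (no one a scalar multiple of another), while every set of pairwise non-parallel vectors in C(Q) has cardinality at most 4n². -/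
open Matrix

noncomputable section

namespace Stmt9Aux
open Finset

def sg (b : Bool) : ℝ := if b then 1 else -1

lemma sg_cases (b : Bool) : sg b = 1 ∨ sg b = -1 := by cases b <;> simp [sg]
lemma sg_ne_zero (b : Bool) : sg b ≠ 0 := by cases b <;> norm_num [sg]
lemma sg_mul_self (b : Bool) : sg b * sg b = 1 := by cases b <;> norm_num [sg]
lemma sg_le_one (b : Bool) : sg b ≤ 1 := by cases b <;> norm_num [sg]
lemma mul_le_one_of_pm {a c : ℝ} (ha : a = 1 ∨ a = -1) (hc : c = 1 ∨ c = -1) :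
    a * c ≤ 1 := by rcases ha with rfl|rfl <;> rcases hc with rfl|rfl <;> norm_num

variable (n : ℕ)

def eB : (Fin n → Bool) ≃ Fin (2 ^ n) := Fintype.equivFinOfCardEq (by simp)

def BPm : Matrix (Fin (2 ^ n)) (Fin n) ℝ := fun i j => sg ((eB n).symm i j)

def APm : Matrix (Fin 0) (Fin n) ℝ := 0

def Pset : Set (Fin n → ℝ) := polySet (APm n) 0 (BPm n) (fun _ => 1)

lemma BPm_row (f : Fin n → Bool) (j : Fin n) : BPm n (eB n f) j = sg (f j) := by
  simp [BPm]

lemma BPm_pm (i : Fin (2 ^ n)) (j : Fin n) : BPm n i j = 1 ∨ BPm n i j = -1 :=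
  sg_cases _

lemma mulVec_eq_sum {q : ℕ} (M : Matrix (Fin q) (Fin n) ℝ) (x : Fin n → ℝ) (i : Fin q) :
    M.mulVec x i = ∑ j, M i j * x j := rfl

lemma APm_mulVec (x : Fin n → ℝ) : (APm n).mulVec x = 0 := by
  funext i; exact i.elim0

lemma memP_iff (x : Fin n → ℝ) :
    x ∈ Pset n ↔ ∀ f : Fin n → Bool, (∑ j, sg (f j) * x j) ≤ 1 := by
  constructor
  · rintro ⟨-, h⟩ f
    have := h (eB n f)
    simpa [mulVec_eq_sum, BPm_row] using this
  · intro h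
    refine ⟨by simp [APm_mulVec], fun i => ?_⟩
    have := h ((eB n).symm i)
    simpa [mulVec_eq_sum, BPm] using this

lemma pointedP : PointedSet (Pset n) := by
  intro x v h
  classical
  set f : Fin n → Bool := fun j => decide (0 ≤ v j) with hf
  have hsg : ∀ j, sg (f j) * v j = |v j| := by
    intro j
    by_cases hj : 0 ≤ v j
    · simp [hf, hj, sg, abs_of_nonneg hj]
    · have : f j = false := by simp [hf, hj]
      rw [this, abs_of_neg (lt_of_not_ge hj)]
      simp [sg]
  have key : ∀ t : ℝ, (∑ j, sg (f j) * x j) + t * (∑ j, |v j|) ≤ 1 := by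
    intro t
    have := (memP_iff n _).1 (h t) f
    calc (∑ j, sg (f j) * x j) + t * (∑ j, |v j|)
        = ∑ j, sg (f j) * (x + t • v) j := by
          rw [Finset.mul_sum, ← Finset.sum_add_distrib]
          congr 1; funext j
          rw [← hsg j]; simp [Pi.add_apply]; ring
      _ ≤ 1 := this
  have hSv : (∑ j, |v j|) ≤ 0 := by
    by_contra hpos
    push_neg at hpos
    have h2 := key ((2 - (∑ j, sg (f j) * x j)) / (∑ j, |v j|))
    rw [div_mul_cancel₀ _ (ne_of_gt hpos)] at h2
    linarith
  have hz : ∀ j ∈ Finset.univ, |v j| = 0 := by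
    intro j _
    have hnn : ∀ j ∈ Finset.univ, (0:ℝ) ≤ |v j| := fun j _ => abs_nonneg _
    have := (Finset.sum_eq_zero_iff_of_nonneg hnn).1 (le_antisymm hSv (Finset.sum_nonneg hnn))
    exact this j (Finset.mem_univ j)
  funext j
  simpa using hz j (Finset.mem_univ j)

lemma zero_memP : (0 : Fin n → ℝ) ∈ Pset n := by
  rw [memP_iff]; intro f; simp

lemma single_memP (j : Fin n) : (Pi.single j 1 : Fin n → ℝ) ∈ Pset n := by
  classical
  rw [memP_iff]; intro f
  rw [Finset.sum_eq_single j]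
  · simp [sg_le_one]
  · intro l _ hl; simp [Pi.single_apply, hl]
  · simp

lemma affineSpanP_top : affineSpan ℝ (Pset n) = ⊤ := by
  classical
  have hdir : ∀ v : Fin n → ℝ, v ∈ (affineSpan ℝ (Pset n)).direction := by
    intro v
    have hv : v = ∑ j, (v j) • (Pi.single j (1:ℝ) : Fin n → ℝ) := by
      funext l
      rw [Finset.sum_apply, Finset.sum_eq_single l]
      · simp
      · intro b _ hb; simp [Pi.single_apply, hb]
      · simp
    rw [hv]
    refine Submodule.sum_mem _ fun j _ => Submodule.smul_mem _ _ ?_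
    have h1 : (Pi.single j (1:ℝ)) ∈ affineSpan ℝ (Pset n) :=
      subset_affineSpan ℝ _ (single_memP n j)
    have h0 : (0 : Fin n → ℝ) ∈ affineSpan ℝ (Pset n) :=
      subset_affineSpan ℝ _ (zero_memP n)
    have := AffineSubspace.vsub_mem_direction h1 h0
    simpa using this
  refine le_antisymm le_top ?_
  intro x _
  have h0 : (0 : Fin n → ℝ) ∈ affineSpan ℝ (Pset n) :=
    subset_affineSpan ℝ _ (zero_memP n)
  have := AffineSubspace.vadd_mem_of_mem_direction (hdir (x - 0)) h0
  simpa using this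

lemma spanDimP : spanDim (Pset n) = n := by
  rw [spanDim, affineSpanP_top, AffineSubspace.direction_top]
  simp

def dotL (c : Fin n → ℝ) : (Fin n → ℝ) →ₗ[ℝ] ℝ where
  toFun x := ∑ j, c j * x j
  map_add' x y := by
    simp [mul_add, Finset.sum_add_distrib]
  map_smul' t x := by
    simp only [Pi.smul_apply, smul_eq_mul, RingHom.id_apply, Finset.mul_sum]
    congr 1; funext j; ring

lemma dotL_apply (c x : Fin n → ℝ) : dotL n c x = ∑ j, c j * x j := rfl

lemma finrank_ker_dotL (c : Fin n → ℝ) (j0 : Fin n) (hc : c j0 ≠ 0) :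
    Module.finrank ℝ (LinearMap.ker (dotL n c)) + 1 = n := by
  classical
  have hsurj : LinearMap.range (dotL n c) = ⊤ := by
    rw [LinearMap.range_eq_top]
    intro r
    refine ⟨(r / c j0) • (Pi.single j0 1 : Fin n → ℝ), ?_⟩
    rw [dotL_apply, Finset.sum_eq_single j0]
    · simp [div_mul_comm]
      field_simp
    · intro b _ hb; simp [Pi.single_apply, hb]
    · simp
  have := LinearMap.finrank_range_add_finrank_ker (dotL n c)
  rw [hsurj, finrank_top] at this
  simp only [Module.finrank_self] at this
  have hn : Module.finrank ℝ (Fin n → ℝ) = n := by simp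
  omega

/-- the vertex-like points `c j • e_j` of a facet -/
def pt (c : Fin n → ℝ) (j : Fin n) : Fin n → ℝ := fun l => if l = j then c j else 0

lemma pt_memP (c : Fin n → ℝ) (hc : ∀ j, c j = 1 ∨ c j = -1) (j : Fin n) :
    pt n c j ∈ Pset n := by
  classical
  rw [memP_iff]; intro f
  rw [Finset.sum_eq_single j]
  · have hpt : pt n c j j = c j := by simp [pt]
    rw [hpt]
    exact mul_le_one_of_pm (sg_cases _) (hc j)
  · intro b _ hb; simp [pt, hb]
  · simp [pt]

lemma dot_pt (c : Fin n → ℝ) (hc : ∀ j, c j * c j = 1) (j : Fin n) :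
    ∑ l, c l * pt n c j l = 1 := by
  classical
  rw [Finset.sum_eq_single j]
  · simp [pt, hc j]
  · intro b _ hb; simp [pt, hb]
  · simp [pt]

lemma facetP (i : Fin (2 ^ n)) (hn3 : 0 < n) :
    IsFacet (Pset n) {x ∈ Pset n | (BPm n).mulVec x i = 1} := by
  classical
  set c : Fin n → ℝ := BPm n i with hcdef
  have hc : ∀ j, c j = 1 ∨ c j = -1 := fun j => BPm_pm n i j
  have hcsq : ∀ j, c j * c j = 1 := by
    intro j; rcases hc j with h|h <;> rw [h] <;> norm_num
  have hcne : c ⟨0, hn3⟩ ≠ 0 := by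
    rcases hc ⟨0, hn3⟩ with h|h <;> rw [h] <;> norm_num
  have hptF : ∀ j, pt n c j ∈ {x ∈ Pset n | (BPm n).mulVec x i = 1} := by
    intro j
    refine ⟨pt_memP n c hc j, ?_⟩
    rw [mulVec_eq_sum]
    exact dot_pt n c hcsq j
  constructor
  · right
    refine ⟨c, 1, ?_, ⟨pt n c ⟨0, hn3⟩, (hptF _).1, ?_⟩, ?_⟩
    · intro y hy
      exact hy.2 i
    · exact dot_pt n c hcsq _
    · rfl
  · have hdireq : (affineSpan ℝ {x ∈ Pset n | (BPm n).mulVec x i = 1}).direction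
        = LinearMap.ker (dotL n c) := by
      apply le_antisymm
      · rw [direction_affineSpan, vectorSpan_def, Submodule.span_le]
        rintro v ⟨x, hx, y, hy, rfl⟩
        have : dotL n c (x - y) = 0 := by
          rw [map_sub]
          have hx2 : dotL n c x = 1 := hx.2
          have hy2 : dotL n c y = 1 := hy.2
          rw [hx2, hy2, sub_self]
        simpa using this
      · intro v hv
        have hv0 : ∑ j, c j * v j = 0 := hv
        have hid : v = ∑ j, (c j * v j) • (pt n c j - pt n c ⟨0, hn3⟩) := by
          funext l
          rw [Finset.sum_apply]
          have : ∀ j, ((c j * v j) • (pt n c j - pt n c ⟨0, hn3⟩)) l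
              = (c j * v j) * (if l = j then c j else 0)
                - (c j * v j) * (if l = ⟨0, hn3⟩ then c ⟨0, hn3⟩ else 0) := by
            intro j; simp [pt, mul_sub]
          rw [Finset.sum_congr rfl (fun j _ => this j), Finset.sum_sub_distrib]
          have h1 : ∑ j, (c j * v j) * (if l = j then c j else 0) = v l := by
            rw [Finset.sum_eq_single l]
            · simp only [if_pos rfl]
              calc c l * v l * c l = (c l * c l) * v l := by ring
                _ = v l := by rw [hcsq l]; ring
            · intro b _ hb; simp [Ne.symm hb]
            · simp
          have h2 : ∑ j, (c j * v j) * (if l = ⟨0, hn3⟩ then c ⟨0, hn3⟩ else 0) = 0 := by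
            by_cases hl : l = ⟨0, hn3⟩
            · simp only [if_pos hl, ← Finset.sum_mul, hv0, zero_mul]
            · simp [if_neg hl]
          rw [h1, h2, sub_zero]
        rw [hid]
        refine Submodule.sum_mem _ fun j _ => Submodule.smul_mem _ _ ?_
        exact AffineSubspace.vsub_mem_direction
          (subset_affineSpan ℝ _ (hptF j)) (subset_affineSpan ℝ _ (hptF ⟨0, hn3⟩))
    rw [spanDim, hdireq, spanDimP, finrank_ker_dotL n c ⟨0, hn3⟩ hcne]

lemma sum_alt (s k : ℕ) (hke : k % 2 = 0) :
    ∑ t ∈ Finset.Ico s (s + k), (-1 : ℝ) ^ t = 0 := by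
  have h1 : ∀ m : ℕ, ∑ t ∈ Finset.range m, (-1:ℝ)^t = ((-1)^m - 1)/(-1-1) :=
    fun m => geom_sum_eq (by norm_num) m
  rw [Finset.sum_Ico_eq_sub _ (Nat.le_add_right s k), h1, h1]
  have hpk : (-1:ℝ)^(s+k) = (-1)^s := by
    have hek : Even k := ⟨k/2, by omega⟩
    have h2 : (-1:ℝ)^k = 1 := hek.neg_one_pow
    rw [pow_add, h2, mul_one]
  rw [hpk, sub_self]

lemma circuitP (g : Fin n → ℝ) (s k : ℕ) (hk2 : 2 ≤ k) (hke : k % 2 = 0)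
    (hskn : s + k ≤ n)
    (hsup : ∀ j : Fin n, s ≤ (j:ℕ) ∧ (j:ℕ) < s + k → (g j = 1 ∨ g j = -1))
    (hoff : ∀ j : Fin n, ¬(s ≤ (j:ℕ) ∧ (j:ℕ) < s + k) → g j = 0) :
    g ∈ circuits (APm n) (BPm n) := by
  classical
  have hgsq : ∀ j : Fin n, s ≤ (j:ℕ) ∧ (j:ℕ) < s + k → g j * g j = 1 := by
    intro j hj; rcases hsup j hj with h|h <;> rw [h] <;> norm_num
  have hsn : s < n := by omega
  have hgs : g ⟨s, hsn⟩ = 1 ∨ g ⟨s, hsn⟩ = -1 := hsup _ (by simp; omega)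
  have hg0 : g ≠ 0 := by
    intro h
    have := congrFun h ⟨s, hsn⟩
    rcases hgs with hh|hh <;> rw [hh] at this <;> norm_num at this
  refine ⟨APm_mulVec n g, hg0, ?_⟩
  intro y _ hy0 hsub
  -- the base certificate
  set c0 : Fin n → ℝ :=
    fun j => if s ≤ (j:ℕ) ∧ (j:ℕ) < s + k then (-1:ℝ)^(j:ℕ) * g j else 1 with hc0def
  have hc0pm : ∀ j, c0 j = 1 ∨ c0 j = -1 := by
    intro j
    by_cases hj : s ≤ (j:ℕ) ∧ (j:ℕ) < s + k
    · simp only [hc0def, if_pos hj]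
      rcases hsup j hj with h|h <;> rcases Nat.even_or_odd (j:ℕ) with he|ho
      · left; rw [h, Even.neg_one_pow he, mul_one]
      · right; rw [h, Odd.neg_one_pow ho, mul_one]
      · right; rw [h, Even.neg_one_pow he]; norm_num
      · left; rw [h, Odd.neg_one_pow ho]; norm_num
    · left; simp only [hc0def, if_neg hj]
  have hc0g : ∑ j, c0 j * g j = 0 := by
    have hterm : ∀ j : Fin n, c0 j * g j
        = (fun t : ℕ => if s ≤ t ∧ t < s + k then (-1:ℝ)^t else 0) (j:ℕ) := by
      intro j
      by_cases hj : s ≤ (j:ℕ) ∧ (j:ℕ) < s + k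
      · simp only [hc0def, if_pos hj]
        rw [mul_assoc, hgsq j hj, mul_one]
      · simp only [hc0def, if_neg hj, hoff j hj, mul_zero]
    rw [Finset.sum_congr rfl (fun j _ => hterm j),
      Fin.sum_univ_eq_sum_range (fun t => if s ≤ t ∧ t < s + k then (-1:ℝ)^t else 0) n,
      ← Finset.sum_filter]
    have hfil : (Finset.range n).filter (fun t => s ≤ t ∧ t < s + k)
        = Finset.Ico s (s + k) := by
      ext t; simp [Finset.mem_Ico, Finset.mem_filter, Finset.mem_range]; omega
    rw [hfil, sum_alt s k hke]
  -- step A : any ±1 certificate orthogonal to g is orthogonal to y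
  have hstep : ∀ c : Fin n → ℝ, (∀ j, c j = 1 ∨ c j = -1) →
      (∑ j, c j * g j = 0) → ∑ j, c j * y j = 0 := by
    intro c hpm hcg
    set f : Fin n → Bool := fun j => if c j = 1 then true else false with hfdef
    have hsgf : ∀ j, sg (f j) = c j := by
      intro j
      rcases hpm j with h|h
      · simp [hfdef, h, sg]
      · have hne : ¬ (c j = 1) := by rw [h]; norm_num
        have hf : f j = false := by simp [hfdef, hne]
        rw [hf, h]; simp [sg]
    have hBg : (BPm n).mulVec g (eB n f) = 0 := by
      rw [mulVec_eq_sum]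
      simp only [BPm_row, hsgf]
      exact hcg
    by_contra hne
    have hBy : (BPm n).mulVec y (eB n f) ≠ 0 := by
      rw [mulVec_eq_sum]
      simpa only [BPm_row, hsgf] using hne
    exact absurd hBg (hsub hBy)
  -- master flip lemma
  have hEy : ∀ E : Finset (Fin n), (∑ j ∈ E, c0 j * g j = 0) →
      ∑ j ∈ E, c0 j * y j = 0 := by
    intro E hEg
    set cE : Fin n → ℝ := fun j => if j ∈ E then -(c0 j) else c0 j with hcEdef
    have hcEpm : ∀ j, cE j = 1 ∨ cE j = -1 := by
      intro j
      by_cases hj : j ∈ E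
      · rcases hc0pm j with h|h
        · right; simp [hcEdef, hj, h]
        · left; simp [hcEdef, hj, h]
      · simp only [hcEdef, if_neg hj]; exact hc0pm j
    have split : ∀ x : Fin n → ℝ,
        ∑ j, cE j * x j = (∑ j, c0 j * x j) - 2 * ∑ j ∈ E, c0 j * x j := by
      intro x
      have hterm : ∀ j : Fin n, cE j * x j
          = c0 j * x j - (if j ∈ E then 2 * (c0 j * x j) else 0) := by
        intro j; by_cases hj : j ∈ E <;> simp [hcEdef, hj] <;> ring
      rw [Finset.sum_congr rfl (fun j _ => hterm j), Finset.sum_sub_distrib,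
        Finset.sum_ite_mem, Finset.univ_inter, Finset.mul_sum]
    have hcEg : ∑ j, cE j * g j = 0 := by rw [split, hc0g, hEg]; ring
    have h1 := hstep cE hcEpm hcEg
    have h2 := hstep c0 hc0pm hc0g
    rw [split, h2] at h1
    linarith
  -- off-support coordinates of y vanish
  have hyoff : ∀ j : Fin n, ¬(s ≤ (j:ℕ) ∧ (j:ℕ) < s + k) → y j = 0 := by
    intro j hj
    have h := hEy {j} (by rw [Finset.sum_singleton, hoff j hj, mul_zero])
    rw [Finset.sum_singleton] at h
    rcases hc0pm j with hc|hc <;> rw [hc] at h <;> linarith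
  -- the chain
  have hchain : ∀ t, s ≤ t → ∀ h2 : t < s + k,
      g ⟨t, by omega⟩ * y ⟨t, by omega⟩ = g ⟨s, hsn⟩ * y ⟨s, hsn⟩ := by
    intro t ht
    induction t, ht using Nat.le_induction with
    | base => intro _; rfl
    | succ t ht ih =>
      intro h2
      have htk : t < s + k := by omega
      have htn : t < n := by omega
      have ht1n : t + 1 < n := by omega
      set j1 : Fin n := ⟨t, htn⟩
      set j2 : Fin n := ⟨t + 1, ht1n⟩
      have hne12 : j1 ≠ j2 := by
        intro h; have := congrArg Fin.val h; simp [j1, j2] at this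
      have hj1 : s ≤ (j1:ℕ) ∧ (j1:ℕ) < s + k := by simp [j1]; omega
      have hj2 : s ≤ (j2:ℕ) ∧ (j2:ℕ) < s + k := by simp [j2]; omega
      have hEg : ∑ j ∈ ({j1, j2} : Finset (Fin n)), c0 j * g j = 0 := by
        rw [Finset.sum_pair hne12]
        simp only [hc0def, if_pos hj1, if_pos hj2]
        have e1 : (-1:ℝ)^(j1:ℕ) * g j1 * g j1 = (-1:ℝ)^t := by
          rw [mul_assoc, hgsq j1 hj1, mul_one]
        have e2 : (-1:ℝ)^(j2:ℕ) * g j2 * g j2 = -(-1:ℝ)^t := by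
          rw [mul_assoc, hgsq j2 hj2, mul_one]
          show (-1:ℝ)^(t+1) = -(-1:ℝ)^t
          rw [pow_succ]; ring
        rw [e1, e2]; ring
      have h := hEy {j1, j2} hEg
      rw [Finset.sum_pair hne12] at h
      simp only [hc0def, if_pos hj1, if_pos hj2] at h
      have hp : (-1:ℝ)^((j2:ℕ)) = -(-1:ℝ)^(j1:ℕ) := by
        show (-1:ℝ)^(t+1) = -(-1:ℝ)^t
        rw [pow_succ]; ring
      rw [hp] at h
      have hkey : g j1 * y j1 = g j2 * y j2 := by
        have hpow : (-1:ℝ)^(j1:ℕ) ≠ 0 := pow_ne_zero _ (by norm_num)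
        have : (-1:ℝ)^(j1:ℕ) * (g j1 * y j1) = (-1:ℝ)^(j1:ℕ) * (g j2 * y j2) := by
          ring_nf
          ring_nf at h
          linarith
        exact mul_left_cancel₀ hpow this
      rw [← hkey]
      exact ih htk
  set cc : ℝ := g ⟨s, hsn⟩ * y ⟨s, hsn⟩ with hccdef
  have hyeq : y = cc • g := by
    funext j
    by_cases hj : s ≤ (j:ℕ) ∧ (j:ℕ) < s + k
    · have hch := hchain (j:ℕ) hj.1 hj.2
      have hjeta : (⟨(j:ℕ), by omega⟩ : Fin n) = j := by
        apply Fin.ext; rfl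
      rw [hjeta] at hch
      have : g j * (g j * y j) = g j * cc := by rw [hch]
      rw [← mul_assoc, hgsq j hj, one_mul] at this
      simp only [Pi.smul_apply, smul_eq_mul]
      rw [this]; ring
    · simp only [Pi.smul_apply, smul_eq_mul, hoff j hj, hyoff j hj, mul_zero]
  have hccne : cc ≠ 0 := by
    intro h
    apply hy0
    rw [hyeq, h, zero_smul]
  intro i hi
  have : (BPm n).mulVec y i = cc * (BPm n).mulVec g i := by
    rw [hyeq, Matrix.mulVec_smul]
    rfl
  simp only [Set.mem_setOf_eq, this]
  exact mul_ne_zero hccne hi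

def kk : ℕ := n - n % 2

lemma kk_even : (kk n) % 2 = 0 := by unfold kk; omega
lemma kk_le : kk n ≤ n := by unfold kk; omega

variable {n}

lemma kk_two (hn : 3 ≤ n) : 2 ≤ kk n := by unfold kk; omega

lemma s_kk_le (hn : 3 ≤ n) (s : Fin (n % 2 + 1)) : (s:ℕ) + kk n ≤ n := by
  have := s.isLt; unfold kk; omega

variable (n)

def FF (p : Fin (n % 2 + 1) × (Fin (kk n - 1) → Bool)) : Fin n → ℝ :=
  fun j =>
    if h : (p.1:ℕ) ≤ (j:ℕ) ∧ (j:ℕ) < (p.1:ℕ) + kk n then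
      (if hj : (j:ℕ) = (p.1:ℕ) then 1
       else sg (p.2 ⟨(j:ℕ) - (p.1:ℕ) - 1, by omega⟩))
    else 0

variable {n}

lemma FF_circuit (hn : 3 ≤ n) (p : Fin (n % 2 + 1) × (Fin (kk n - 1) → Bool)) :
    FF n p ∈ circuits (APm n) (BPm n) := by
  apply circuitP n (FF n p) (p.1:ℕ) (kk n) (kk_two hn) (kk_even n) (s_kk_le hn p.1)
  · intro j hj
    unfold FF
    rw [dif_pos hj]
    by_cases hjs : (j:ℕ) = (p.1:ℕ)
    · rw [dif_pos hjs]; left; rfl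
    · rw [dif_neg hjs]; exact sg_cases _
  · intro j hj
    unfold FF
    rw [dif_neg hj]

lemma FF_start (hn : 3 ≤ n) (p : Fin (n % 2 + 1) × (Fin (kk n - 1) → Bool)) :
    FF n p ⟨(p.1:ℕ), by have := s_kk_le hn p.1; have := kk_two hn; omega⟩ = 1 := by
  unfold FF
  rw [dif_pos ⟨le_refl _, show (p.1:ℕ) < (p.1:ℕ) + kk n from by have := kk_two hn; omega⟩]
  rw [dif_pos rfl]

lemma FF_zero (hn : 3 ≤ n) (p : Fin (n % 2 + 1) × (Fin (kk n - 1) → Bool)) :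
    FF n p ⟨0, by omega⟩ = if (p.1:ℕ) = 0 then 1 else 0 := by
  unfold FF
  by_cases hs : (p.1:ℕ) = 0
  · rw [if_pos hs, dif_pos ⟨hs.le, show (0:ℕ) < (p.1:ℕ) + kk n from by have := kk_two hn; omega⟩, dif_pos hs.symm]
  · rw [if_neg hs, dif_neg (fun hcon => hs (Nat.le_antisymm hcon.1 (Nat.zero_le _)))]

lemma FF_inner (hn : 3 ≤ n) (p : Fin (n % 2 + 1) × (Fin (kk n - 1) → Bool))
    (i : Fin (kk n - 1)) :
    FF n p ⟨(p.1:ℕ) + 1 + (i:ℕ), by have := s_kk_le hn p.1; have := i.isLt; omega⟩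
      = sg (p.2 i) := by
  unfold FF
  have hi := i.isLt
  rw [dif_pos ⟨show (p.1:ℕ) ≤ (p.1:ℕ) + 1 + (i:ℕ) from by omega,
        show (p.1:ℕ) + 1 + (i:ℕ) < (p.1:ℕ) + kk n from by omega⟩,
      dif_neg (show ¬((p.1:ℕ) + 1 + (i:ℕ) = (p.1:ℕ)) from by omega)]
  congr 1
  exact congrArg p.2 (Fin.ext
    (show (p.1:ℕ) + 1 + (i:ℕ) - (p.1:ℕ) - 1 = (i:ℕ) from by omega))

lemma FF_inj (hn : 3 ≤ n) : Function.Injective (FF n) := by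
  intro p q hpq
  have hs : p.1 = q.1 := by
    apply Fin.ext
    have h0 := congrFun hpq ⟨0, by omega⟩
    rw [FF_zero hn p, FF_zero hn q] at h0
    have hp1 := p.1.isLt
    have hq1 := q.1.isLt
    by_cases h1 : (p.1:ℕ) = 0 <;> by_cases h2 : (q.1:ℕ) = 0 <;>
      simp [h1, h2] at h0 <;> omega
  have hb : p.2 = q.2 := by
    funext i
    have hi := congrFun hpq ⟨(p.1:ℕ) + 1 + (i:ℕ),
      by have := s_kk_le hn p.1; have := i.isLt; omega⟩
    rw [FF_inner hn p i] at hi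
    have : FF n q ⟨(q.1:ℕ) + 1 + (i:ℕ),
        by have := s_kk_le hn q.1; have := i.isLt; omega⟩ = sg (q.2 i) :=
      FF_inner hn q i
    have hidx : (⟨(p.1:ℕ) + 1 + (i:ℕ), by have := s_kk_le hn p.1; have := i.isLt; omega⟩ : Fin n)
        = ⟨(q.1:ℕ) + 1 + (i:ℕ), by have := s_kk_le hn q.1; have := i.isLt; omega⟩ :=
      by apply Fin.ext; exact congrArg (fun x => x + 1 + (i:ℕ)) (congrArg Fin.val hs)
    rw [hidx, this] at hi
    cases hpb : p.2 i <;> cases hqb : q.2 i <;> rw [hpb, hqb] at hi <;>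
      first | rfl | (norm_num [sg] at hi)
  exact Prod.ext hs hb

lemma SP_card (hn : 3 ≤ n) : 2 ^ (n - 1) ≤ (Set.range (FF n)).ncard := by
  rw [← Nat.card_coe_set_eq, Nat.card_range_of_injective (FF_inj hn),
    Nat.card_eq_fintype_card, Fintype.card_prod, Fintype.card_fin]
  have hcf : Fintype.card (Fin (kk n - 1) → Bool) = 2 ^ (kk n - 1) := by simp
  rw [hcf]
  have h01 : n % 2 = 0 ∨ n % 2 = 1 := by omega
  rcases h01 with h|h
  · have hkn : kk n = n := by unfold kk; omega
    rw [h, hkn]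
    simp
  · have hkn : kk n = n - 1 := by unfold kk; omega
    rw [h, hkn]
    have h2 : n - 1 - 1 + 1 = n - 1 := by omega
    have h3 : (2:ℕ) ^ (n-1) = 2 * 2 ^ (n-1-1) := by
      conv_lhs => rw [← h2]
      ring
    rw [h3]

lemma SP_pairwise (hn : 3 ≤ n) :
    (Set.range (FF n)).Pairwise fun u v => ¬ ∃ c : ℝ, u = c • v := by
  rintro u ⟨p, rfl⟩ v ⟨q, rfl⟩ hne ⟨c, hc⟩
  have hc0 : c ≠ 0 := by
    rintro rfl
    have h1 := congrFun hc ⟨(p.1:ℕ), by have := s_kk_le hn p.1; have := kk_two hn; omega⟩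
    rw [FF_start hn p] at h1
    simp at h1
  have hst : p.1 = q.1 := by
    apply Fin.ext
    have h0 := congrFun hc ⟨0, by omega⟩
    simp only [Pi.smul_apply, smul_eq_mul] at h0
    rw [FF_zero hn p, FF_zero hn q] at h0
    have hp1 := p.1.isLt
    have hq1 := q.1.isLt
    by_cases h1 : (p.1:ℕ) = 0 <;> by_cases h2 : (q.1:ℕ) = 0
    · omega
    · rw [if_pos h1, if_neg h2] at h0; norm_num at h0
    · rw [if_neg h1, if_pos h2] at h0; norm_num at h0; exact absurd h0.symm hc0
    · omega
  have hc1 : c = 1 := by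
    have h1 := congrFun hc ⟨(p.1:ℕ), by have := s_kk_le hn p.1; have := kk_two hn; omega⟩
    rw [FF_start hn p] at h1
    simp only [Pi.smul_apply, smul_eq_mul] at h1
    have h2 : FF n q ⟨(q.1:ℕ), by have := s_kk_le hn q.1; have := kk_two hn; omega⟩ = 1 :=
      FF_start hn q
    have hidx : (⟨(p.1:ℕ), by have := s_kk_le hn p.1; have := kk_two hn; omega⟩ : Fin n)
        = ⟨(q.1:ℕ), by have := s_kk_le hn q.1; have := kk_two hn; omega⟩ :=
      by apply Fin.ext; show (p.1:ℕ) = (q.1:ℕ); exact congrArg Fin.val hst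
    rw [hidx, h2] at h1
    linarith
  apply hne
  rw [hc, hc1, one_smul]

variable (m : ℕ)

def AQm : Matrix (Fin 1) (Fin m) ℝ := fun _ _ => 1
def BQm : Matrix (Fin m) (Fin m) ℝ := fun k l => if k = l then -1 else 0
def Qset : Set (Fin m → ℝ) := polySet (AQm m) (fun _ => 1) (BQm m) 0

lemma BQm_mulVec (y : Fin m → ℝ) (k : Fin m) : (BQm m).mulVec y k = -(y k) := by
  rw [mulVec_eq_sum, Finset.sum_eq_single k]
  · simp [BQm]
  · intro l _ hl; simp [BQm, Ne.symm hl]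
  · simp

lemma AQm_mulVec (y : Fin m → ℝ) (i : Fin 1) : (AQm m).mulVec y i = ∑ l, y l := by
  rw [mulVec_eq_sum]; simp [AQm]

lemma memQ_iff (y : Fin m → ℝ) :
    y ∈ Qset m ↔ (∑ l, y l) = 1 ∧ ∀ k, 0 ≤ y k := by
  constructor
  · rintro ⟨h1, h2⟩
    constructor
    · have := congrFun h1 0
      rwa [AQm_mulVec] at this
    · intro k
      have := h2 k
      rw [BQm_mulVec] at this
      simpa using this
  · rintro ⟨h1, h2⟩
    constructor
    · funext i
      rw [AQm_mulVec]; exact h1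
    · intro k
      rw [BQm_mulVec]
      simpa using h2 k

def dl (a : Fin m) : Fin m → ℝ := Pi.single a 1

lemma dl_memQ (a : Fin m) : dl m a ∈ Qset m := by
  rw [memQ_iff]
  constructor
  · rw [Finset.sum_eq_single a]
    · simp [dl]
    · intro l _ hl; simp [dl, Pi.single_apply, hl]
    · simp
  · intro k
    rcases eq_or_ne k a with rfl|h
    · simp [dl]
    · simp [dl, Pi.single_apply, Ne.symm h]

lemma pointedQ : PointedSet (Qset m) := by
  intro x v h
  funext k
  by_contra hv
  have key : ∀ t : ℝ, 0 ≤ x k + t * v k := by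
    intro t
    have := ((memQ_iff m _).1 (h t)).2 k
    simpa using this
  have := key ((-(x k) - 1) / v k)
  rw [div_mul_cancel₀ _ hv] at this
  linarith

lemma affineSpanQ_set (hm : 1 ≤ m) :
    (affineSpan ℝ (Qset m) : Set (Fin m → ℝ)) = {y | ∑ l, y l = 1} := by
  apply le_antisymm
  · have hle : affineSpan ℝ (Qset m) ≤
        { carrier := {y : Fin m → ℝ | ∑ l, y l = 1}
          smul_vsub_vadd_mem' := by
            intro c p1 p2 p3 h1 h2 h3
            simp only [Set.mem_setOf_eq] at *
            have : ∀ l, (c • (p1 -ᵥ p2) +ᵥ p3) l = c * (p1 l - p2 l) + p3 l := by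
              intro l; rfl
            rw [Finset.sum_congr rfl (fun l _ => this l), Finset.sum_add_distrib, h3]
            have : ∑ l, c * (p1 l - p2 l) = c * ((∑ l, p1 l) - ∑ l, p2 l) := by
              rw [← Finset.sum_sub_distrib, Finset.mul_sum]
            rw [this, h1, h2]
            ring } := by
      apply affineSpan_le.2
      intro y hy
      exact ((memQ_iff m y).1 hy).1
    exact hle
  · intro y hy
    have h1 : (Finset.univ.affineCombination ℝ (dl m) y) ∈
        affineSpan ℝ (Set.range (dl m)) :=
      affineCombination_mem_affineSpan hy (dl m)
    have h2 : Finset.univ.affineCombination ℝ (dl m) y = y := by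
      rw [Finset.affineCombination_eq_linear_combination _ _ _ hy]
      funext l
      rw [Finset.sum_apply, Finset.sum_eq_single l]
      · simp [dl]
      · intro b _ hb; simp [dl, Pi.single_apply, Ne.symm hb]
      · simp
    rw [h2] at h1
    have h3 : affineSpan ℝ (Set.range (dl m)) ≤ affineSpan ℝ (Qset m) := by
      apply affineSpan_mono
      rintro z ⟨a, rfl⟩
      exact dl_memQ m a
    exact h3 h1

lemma dirQ (hm : 1 ≤ m) :
    (affineSpan ℝ (Qset m)).direction = LinearMap.ker (dotL m (fun _ => 1)) := by
  apply le_antisymm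
  · rw [direction_affineSpan, vectorSpan_def, Submodule.span_le]
    rintro v ⟨x, hx, y, hy, rfl⟩
    have hx1 := ((memQ_iff m x).1 hx).1
    have hy1 := ((memQ_iff m y).1 hy).1
    have : dotL m (fun _ => 1) (x - y) = 0 := by
      rw [map_sub]
      show dotL m (fun _ => 1) x - dotL m (fun _ => 1) y = 0
      rw [dotL_apply, dotL_apply]
      simp only [one_mul]
      rw [hx1, hy1, sub_self]
    simpa using this
  · intro v hv
    have hv0 : ∑ l, v l = 0 := by
      have : dotL m (fun _ => 1) v = 0 := hv
      rw [dotL_apply] at this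
      simpa using this
    set l0 : Fin m := ⟨0, hm⟩
    have hid : v = ∑ l, (v l) • (dl m l - dl m l0) := by
      funext t
      rw [Finset.sum_apply]
      have hterm : ∀ l, ((v l) • (dl m l - dl m l0)) t
          = v l * (if t = l then 1 else 0) - v l * (if t = l0 then 1 else 0) := by
        intro l
        simp [dl, Pi.single_apply, mul_sub, eq_comm]
      rw [Finset.sum_congr rfl (fun l _ => hterm l), Finset.sum_sub_distrib]
      have h1 : ∑ l, v l * (if t = l then 1 else 0) = v t := by
        rw [Finset.sum_eq_single t]
        · simp
        · intro b _ hb; simp [Ne.symm hb]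
        · simp
      have h2 : ∑ l, v l * (if t = l0 then 1 else 0) = 0 := by
        by_cases ht : t = l0
        · simp only [if_pos ht, mul_one, hv0]
        · simp [if_neg ht]
      rw [h1, h2, sub_zero]
    rw [hid]
    refine Submodule.sum_mem _ fun l _ => Submodule.smul_mem _ _ ?_
    have := AffineSubspace.vsub_mem_direction
      (subset_affineSpan ℝ _ (dl_memQ m l)) (subset_affineSpan ℝ _ (dl_memQ m l0))
    simpa using this

lemma spanDimQ (hm : 1 ≤ m) : spanDim (Qset m) + 1 = m := by
  rw [spanDim, dirQ m hm]
  exact finrank_ker_dotL m (fun _ => 1) ⟨0, hm⟩ (by norm_num)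

def evL (k : Fin m) : (Fin m → ℝ) →ₗ[ℝ] ℝ × ℝ :=
  (dotL m (fun _ => 1)).prod (dotL m (BQm m k))

lemma dotL_BQm (k : Fin m) (y : Fin m → ℝ) : dotL m (BQm m k) y = -(y k) := by
  rw [dotL_apply, Finset.sum_eq_single k]
  · simp [BQm]
  · intro l _ hl; simp [BQm, Ne.symm hl]
  · simp

lemma facetQ (hm : 2 ≤ m) (k : Fin m) :
    IsFacet (Qset m) {y ∈ Qset m | (BQm m).mulVec y k = 0} := by
  classical
  have hm1 : 1 ≤ m := by omega
  -- a point different from k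
  have hex : ∃ l0 : Fin m, l0 ≠ k := by
    rcases eq_or_ne k ⟨0, by omega⟩ with rfl|h
    · exact ⟨⟨1, by omega⟩, by intro h; have := congrArg Fin.val h; simp at this⟩
    · exact ⟨⟨0, by omega⟩, Ne.symm h⟩
  obtain ⟨l0, hl0⟩ := hex
  have hdlF : ∀ l, l ≠ k → dl m l ∈ {y ∈ Qset m | (BQm m).mulVec y k = 0} := by
    intro l hl
    refine ⟨dl_memQ m l, ?_⟩
    rw [BQm_mulVec]
    simp [dl, Pi.single_apply, Ne.symm hl]
  constructor
  · right
    refine ⟨BQm m k, 0, ?_, ⟨dl m l0, dl_memQ m l0, ?_⟩, ?_⟩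
    · intro y hy
      have := ((memQ_iff m y).1 hy).2 k
      show (BQm m k) ⬝ᵥ y ≤ 0
      have hbv : (BQm m k) ⬝ᵥ y = -(y k) := BQm_mulVec m y k
      rw [hbv]; linarith
    · have hbv : (BQm m k) ⬝ᵥ (dl m l0) = -((dl m l0) k) := BQm_mulVec m (dl m l0) k
      rw [hbv]
      simp [dl, Pi.single_apply, Ne.symm hl0]
    · rfl
  · have hdir : (affineSpan ℝ {y ∈ Qset m | (BQm m).mulVec y k = 0}).direction
        = LinearMap.ker (evL m k) := by
      apply le_antisymm
      · rw [direction_affineSpan, vectorSpan_def, Submodule.span_le]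
        rintro v ⟨x, hx, y, hy, rfl⟩
        have hx1 := ((memQ_iff m x).1 hx.1).1
        have hy1 := ((memQ_iff m y).1 hy.1).1
        have hxk : x k = 0 := by have := hx.2; rw [BQm_mulVec] at this; linarith
        have hyk : y k = 0 := by have := hy.2; rw [BQm_mulVec] at this; linarith
        have : evL m k (x - y) = 0 := by
          rw [map_sub]
          have e1 : evL m k x = (1, 0) := by
            show (dotL m (fun _ => 1) x, dotL m (BQm m k) x) = (1, 0)
            rw [dotL_BQm, hxk]
            rw [dotL_apply]
            simp only [one_mul]
            rw [hx1]
            norm_num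
          have e2 : evL m k y = (1, 0) := by
            show (dotL m (fun _ => 1) y, dotL m (BQm m k) y) = (1, 0)
            rw [dotL_BQm, hyk]
            rw [dotL_apply]
            simp only [one_mul]
            rw [hy1]
            norm_num
          rw [e1, e2, sub_self]
        simpa using this
      · intro v hv
        have hv1 : ∑ l, v l = 0 := by
          have : dotL m (fun _ => 1) v = 0 := congrArg Prod.fst hv
          rw [dotL_apply] at this
          simpa using this
        have hvk : v k = 0 := by
          have : dotL m (BQm m k) v = 0 := congrArg Prod.snd hv
          rw [dotL_BQm] at this
          linarith
        have hid : v = ∑ l, (v l) • (dl m l - dl m l0) := by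
          funext t
          rw [Finset.sum_apply]
          have hterm : ∀ l, ((v l) • (dl m l - dl m l0)) t
              = v l * (if t = l then 1 else 0) - v l * (if t = l0 then 1 else 0) := by
            intro l
            simp [dl, Pi.single_apply, mul_sub, eq_comm]
          rw [Finset.sum_congr rfl (fun l _ => hterm l), Finset.sum_sub_distrib]
          have h1 : ∑ l, v l * (if t = l then 1 else 0) = v t := by
            rw [Finset.sum_eq_single t]
            · simp
            · intro b _ hb; simp [Ne.symm hb]
            · simp
          have h2 : ∑ l, v l * (if t = l0 then 1 else 0) = 0 := by
            by_cases ht : t = l0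
            · simp only [if_pos ht, mul_one, hv1]
            · simp [if_neg ht]
          rw [h1, h2, sub_zero]
        rw [hid]
        refine Submodule.sum_mem _ fun l _ => ?_
        rcases eq_or_ne l k with rfl|hlk
        · rw [hvk, zero_smul]
          exact Submodule.zero_mem _
        · refine Submodule.smul_mem _ _ ?_
          have := AffineSubspace.vsub_mem_direction
            (subset_affineSpan ℝ _ (hdlF l hlk)) (subset_affineSpan ℝ _ (hdlF l0 hl0))
          simpa using this
    rw [spanDim, hdir]
    have hsurj : LinearMap.range (evL m k) = ⊤ := by
      rw [LinearMap.range_eq_top]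
      rintro ⟨a, b⟩
      refine ⟨(-b) • dl m k + (a + b) • dl m l0, ?_⟩
      have hsum : ∑ l, ((-b) • dl m k + (a + b) • dl m l0) l = a := by
        have : ∀ l, ((-b) • dl m k + (a + b) • dl m l0) l
            = (-b) * (dl m k l) + (a + b) * (dl m l0 l) := fun l => rfl
        rw [Finset.sum_congr rfl (fun l _ => this l), Finset.sum_add_distrib,
          ← Finset.mul_sum, ← Finset.mul_sum]
        have hs1 : ∑ l, dl m k l = 1 := ((memQ_iff m _).1 (dl_memQ m k)).1
        have hs2 : ∑ l, dl m l0 l = 1 := ((memQ_iff m _).1 (dl_memQ m l0)).1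
        rw [hs1, hs2]
        ring
      have hk : ((-b) • dl m k + (a + b) • dl m l0) k = b * (-1) := by
        have h1 : dl m k k = 1 := by simp [dl]
        have h2 : dl m l0 k = 0 := by simp [dl, Pi.single_apply, hl0]
        show (-b) * (dl m k k) + (a + b) * (dl m l0 k) = b * (-1)
        rw [h1, h2]; ring
      show (dotL m (fun _ => 1) _, dotL m (BQm m k) _) = (a, b)
      rw [dotL_BQm, hk]
      rw [dotL_apply]
      simp only [one_mul]
      rw [hsum]
      norm_num
    have hrn := LinearMap.finrank_range_add_finrank_ker (evL m k)
    rw [hsurj, finrank_top] at hrn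
    have hprod : Module.finrank ℝ (ℝ × ℝ) = 2 := by simp
    have hpi : Module.finrank ℝ (Fin m → ℝ) = m := by simp
    rw [hprod, hpi] at hrn
    have hq := spanDimQ m hm1
    omega

lemma irredundantQ (hm : 2 ≤ m) :
    Irredundant (AQm m) (fun _ => 1) (BQm m) 0 (Qset m) := by
  refine ⟨rfl, ?_, fun k => ?_⟩
  · rw [affineSpanQ_set m (by omega)]
    ext y
    constructor
    · intro hy
      have := congrFun hy 0
      rwa [AQm_mulVec] at this
    · intro hy
      funext i
      rw [AQm_mulVec]
      exact hy
  · have := facetQ m hm k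
    simpa using this

lemma circuitQ_struct (g : Fin m → ℝ) (hg : g ∈ circuits (AQm m) (BQm m)) :
    ∃ ab : Fin m × Fin m, 0 < g ab.1 ∧ g ab.2 < 0 ∧ g ab.2 = -(g ab.1) ∧
      (∀ l, l ≠ ab.1 → l ≠ ab.2 → g l = 0) := by
  classical
  obtain ⟨hA, hg0, hmin⟩ := hg
  have hsum : ∑ l, g l = 0 := by
    have := congrFun hA 0
    rwa [AQm_mulVec] at this
  have ha : ∃ a, 0 < g a := by
    by_contra h
    push_neg at h
    apply hg0
    funext l
    have := (Finset.sum_eq_zero_iff_of_nonpos (fun l _ => h l)).1 hsum l (Finset.mem_univ l)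
    simpa using this
  have hb : ∃ b, g b < 0 := by
    by_contra h
    push_neg at h
    apply hg0
    funext l
    have := (Finset.sum_eq_zero_iff_of_nonneg (fun l _ => h l)).1 hsum l (Finset.mem_univ l)
    simpa using this
  obtain ⟨a, hga⟩ := ha
  obtain ⟨b, hgb⟩ := hb
  have hab : a ≠ b := by intro h; rw [h] at hga; linarith
  set y : Fin m → ℝ := dl m a - dl m b with hydef
  have hyA : (AQm m).mulVec y = 0 := by
    funext i
    rw [AQm_mulVec]
    have : ∀ l, y l = dl m a l - dl m b l := fun l => rfl
    rw [Finset.sum_congr rfl (fun l _ => this l), Finset.sum_sub_distrib]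
    have hs1 : ∑ l, dl m a l = 1 := ((memQ_iff m _).1 (dl_memQ m a)).1
    have hs2 : ∑ l, dl m b l = 1 := ((memQ_iff m _).1 (dl_memQ m b)).1
    rw [hs1, hs2]
    simp
  have hya : y a = 1 := by
    show dl m a a - dl m b a = 1
    simp [dl, Pi.single_apply, Ne.symm hab]
  have hy0 : y ≠ 0 := by
    intro h
    have := congrFun h a
    rw [hya] at this
    norm_num at this
  have hysupp : ∀ l, y l ≠ 0 → l = a ∨ l = b := by
    intro l hl
    by_contra hcon
    push_neg at hcon
    apply hl
    show dl m a l - dl m b l = 0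
    simp [dl, Pi.single_apply, Ne.symm hcon.1, Ne.symm hcon.2]
  have hsub : {i | (BQm m).mulVec y i ≠ 0} ⊆ {i | (BQm m).mulVec g i ≠ 0} := by
    intro l hl
    simp only [Set.mem_setOf_eq, BQm_mulVec, neg_ne_zero] at hl ⊢
    rcases hysupp l hl with rfl|rfl
    · linarith
    · linarith
  have hconc := hmin y hyA hy0 hsub
  have hgsupp : ∀ l, l ≠ a → l ≠ b → g l = 0 := by
    intro l hla hlb
    by_contra hgl
    have hmem : l ∈ {i | (BQm m).mulVec g i ≠ 0} := by
      simp only [Set.mem_setOf_eq, BQm_mulVec, neg_ne_zero]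
      exact hgl
    have := hconc hmem
    simp only [Set.mem_setOf_eq, BQm_mulVec, neg_ne_zero] at this
    apply this
    show dl m a l - dl m b l = 0
    simp [dl, Pi.single_apply, Ne.symm hla, Ne.symm hlb]
  have hgba : g b = -(g a) := by
    have : ∑ l, g l = ∑ l ∈ ({a, b} : Finset (Fin m)), g l := by
      symm
      apply Finset.sum_subset (Finset.subset_univ _)
      intro l _ hl
      simp only [Finset.mem_insert, Finset.mem_singleton] at hl
      push_neg at hl
      exact hgsupp l hl.1 hl.2
    rw [this, Finset.sum_pair hab] at hsum
    linarith
  exact ⟨(a, b), hga, hgb, hgba, hgsupp⟩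

lemma boundQ (S : Set (Fin m → ℝ)) (hS : S ⊆ circuits (AQm m) (BQm m))
    (hP : S.Pairwise fun u v => ¬ ∃ c : ℝ, u = c • v) :
    S.Finite ∧ S.ncard ≤ m * m := by
  classical
  have key : ∀ g : S, ∃ ab : Fin m × Fin m, 0 < (g:Fin m → ℝ) ab.1 ∧
      (g:Fin m → ℝ) ab.2 < 0 ∧ (g:Fin m → ℝ) ab.2 = -((g:Fin m → ℝ) ab.1) ∧
      (∀ l, l ≠ ab.1 → l ≠ ab.2 → (g:Fin m → ℝ) l = 0) :=
    fun g => circuitQ_struct m g (hS g.2)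
  choose φ hφ using key
  have hinj : Function.Injective φ := by
    intro u v huv
    by_contra hne'
    have hneq : (u : Fin m → ℝ) ≠ (v : Fin m → ℝ) := by
      intro h
      exact hne' (Subtype.ext h)
    obtain ⟨hu1, hu2, hu3, hu4⟩ := hφ u
    obtain ⟨hv1, hv2, hv3, hv4⟩ := hφ v
    rw [huv] at hu1 hu2 hu3 hu4
    apply hP u.2 v.2 hneq
    set a := (φ v).1
    set b := (φ v).2
    have hab : a ≠ b := by intro h; rw [h] at hv1; linarith
    have hva : (v:Fin m → ℝ) a ≠ 0 := ne_of_gt hv1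
    refine ⟨(u:Fin m → ℝ) a / (v:Fin m → ℝ) a, ?_⟩
    funext l
    simp only [Pi.smul_apply, smul_eq_mul]
    rcases eq_or_ne l a with rfl|hla
    · field_simp
    · rcases eq_or_ne l b with rfl|hlb
      · rw [hu3, hv3]
        field_simp
      · rw [hu4 l hla hlb, hv4 l hla hlb, mul_zero]
  have hfin : Finite S := Finite.of_injective φ hinj
  have hSfin : S.Finite := Set.finite_coe_iff.1 hfin
  refine ⟨hSfin, ?_⟩
  rw [← Nat.card_coe_set_eq]
  calc Nat.card S ≤ Nat.card (Fin m × Fin m) := Nat.card_le_card_of_injective φ hinj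
    _ = m * m := by simp [Nat.card_eq_fintype_card]

lemma max_add_max_neg (a : ℝ) : max a 0 + max (-a) 0 = |a| := by
  rcases le_total 0 a with h|h
  · rw [max_eq_left h, max_eq_right (by linarith), abs_of_nonneg h, add_zero]
  · rw [max_eq_right h, max_eq_left (by linarith), abs_of_nonpos h, zero_add]

lemma max_sub_max_neg (a : ℝ) : max a 0 - max (-a) 0 = a := by
  rcases le_total 0 a with h|h
  · rw [max_eq_left h, max_eq_right (by linarith), sub_zero]
  · rw [max_eq_right h, max_eq_left (by linarith), zero_sub, neg_neg]

lemma abs_row (x : Fin n → ℝ) : ∃ f : Fin n → Bool, ∀ j, sg (f j) * x j = |x j| := by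
  classical
  refine ⟨fun j => decide (0 ≤ x j), fun j => ?_⟩
  by_cases hj : 0 ≤ x j
  · simp [hj, sg, abs_of_nonneg hj]
  · show sg (decide (0 ≤ x j)) * x j = |x j|
    rw [show (decide (0 ≤ x j)) = false by simp [hj], abs_of_neg (lt_of_not_ge hj)]
    simp [sg]

variable (n)

def wv (k : Fin (n + n)) : Fin n → ℝ :=
  if h : (k:ℕ) < n then Pi.single ⟨(k:ℕ), h⟩ 1
  else -Pi.single ⟨(k:ℕ) - n, by have := k.isLt; omega⟩ 1

def Mpr : Matrix (Fin n) (Fin (n + n)) ℝ := fun j k => wv n k j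

variable {n}

lemma wv_cast (i : Fin n) : wv n (Fin.castAdd n i) = Pi.single i 1 := by
  unfold wv
  rw [dif_pos (show ((Fin.castAdd n i : Fin (n+n)):ℕ) < n from by
    rw [Fin.coe_castAdd]; exact i.isLt)]
  have hidxc : (⟨((Fin.castAdd n i : Fin (n+n)):ℕ),
      by rw [Fin.coe_castAdd]; exact i.isLt⟩ : Fin n) = i := by
    apply Fin.ext
    show ((Fin.castAdd n i : Fin (n+n)):ℕ) = (i:ℕ)
    rw [Fin.coe_castAdd]
  rw [hidxc]

lemma wv_nat (i : Fin n) : wv n (Fin.natAdd n i) = -Pi.single i 1 := by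
  unfold wv
  rw [dif_neg (show ¬(((Fin.natAdd n i : Fin (n+n)):ℕ) < n) from by
    rw [Fin.coe_natAdd]; omega)]
  have hidx : (⟨((Fin.natAdd n i : Fin (n+n)):ℕ) - n,
      by have := (Fin.natAdd n i).isLt; omega⟩ : Fin n) = i := by
    apply Fin.ext
    show ((Fin.natAdd n i : Fin (n+n)):ℕ) - n = (i:ℕ)
    rw [Fin.coe_natAdd]; omega
  rw [hidx]

lemma coef_pm (f : Fin n → Bool) (k : Fin (n + n)) :
    (∑ j, sg (f j) * wv n k j) = 1 ∨ (∑ j, sg (f j) * wv n k j) = -1 := by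
  unfold wv
  by_cases h : (k:ℕ) < n
  · rw [dif_pos h]
    have : ∑ j, sg (f j) * (Pi.single (⟨(k:ℕ), h⟩ : Fin n) (1:ℝ) : Fin n → ℝ) j
        = sg (f ⟨(k:ℕ), h⟩) := by
      rw [Finset.sum_eq_single (⟨(k:ℕ), h⟩ : Fin n)]
      · simp
      · intro b _ hb; simp [Pi.single_apply, hb]
      · simp
    rw [this]
    exact sg_cases _
  · rw [dif_neg h]
    set i : Fin n := ⟨(k:ℕ) - n, by have := k.isLt; omega⟩
    have : ∑ j, sg (f j) * (-(Pi.single i (1:ℝ) : Fin n → ℝ)) j = -sg (f i) := by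
      rw [Finset.sum_eq_single i]
      · simp
      · intro b _ hb; simp [Pi.single_apply, hb]
      · simp
    rw [this]
    rcases sg_cases (f i) with hh|hh <;> rw [hh]
    · right; norm_num
    · left; norm_num

lemma proj_image (hn : 3 ≤ n) :
    (fun y => (Mpr n).mulVecLin y) '' Qset (n + n) = Pset n := by
  classical
  have hmulVec : ∀ (y : Fin (n+n) → ℝ) (j : Fin n),
      (Mpr n).mulVecLin y j = ∑ k, wv n k j * y k := by
    intro y j; rfl
  apply Set.eq_of_subset_of_subset
  · rintro x ⟨y, hy, rfl⟩
    obtain ⟨hy1, hy2⟩ := (memQ_iff (n+n) y).1 hy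
    rw [memP_iff]
    intro f
    have hswap : ∑ j, sg (f j) * (Mpr n).mulVecLin y j
        = ∑ k, (∑ j, sg (f j) * wv n k j) * y k := by
      calc ∑ j, sg (f j) * (Mpr n).mulVecLin y j
          = ∑ j, ∑ k, sg (f j) * (wv n k j * y k) := by
            refine Finset.sum_congr rfl fun j _ => ?_
            rw [hmulVec, Finset.mul_sum]
        _ = ∑ k, ∑ j, sg (f j) * (wv n k j * y k) := Finset.sum_comm
        _ = ∑ k, (∑ j, sg (f j) * wv n k j) * y k := by
            refine Finset.sum_congr rfl fun k _ => ?_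
            rw [Finset.sum_mul]
            refine Finset.sum_congr rfl fun j _ => ?_
            ring
    rw [hswap]
    calc ∑ k, (∑ j, sg (f j) * wv n k j) * y k ≤ ∑ k, y k := by
          refine Finset.sum_le_sum fun k _ => ?_
          have h1 : (∑ j, sg (f j) * wv n k j) ≤ 1 := by
            rcases coef_pm f k with h|h <;> rw [h] <;> norm_num
          calc (∑ j, sg (f j) * wv n k j) * y k ≤ 1 * y k :=
                mul_le_mul_of_nonneg_right h1 (hy2 k)
            _ = y k := one_mul _
      _ = 1 := hy1
  · intro x hx
    obtain ⟨f, hf⟩ := abs_row x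
    have hT : ∑ j, |x j| ≤ 1 := by
      have := (memP_iff n x).1 hx f
      rwa [Finset.sum_congr rfl (fun j _ => hf j)] at this
    set T := ∑ j, |x j| with hTdef
    set s0 : ℝ := (1 - T) / ((n:ℝ) + n) with hs0def
    have hnpos : (0:ℝ) < (n:ℝ) + n := by
      have : (0:ℝ) < (n:ℝ) := by exact_mod_cast (by omega : 0 < n)
      linarith
    have hs0 : 0 ≤ s0 := div_nonneg (by linarith) (le_of_lt hnpos)
    set y : Fin (n + n) → ℝ := fun k =>
      (if h : (k:ℕ) < n then max (x ⟨(k:ℕ), h⟩) 0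
       else max (-(x ⟨(k:ℕ) - n, by have := k.isLt; omega⟩)) 0) + s0 with hydef
    have hycast : ∀ i : Fin n, y (Fin.castAdd n i) = max (x i) 0 + s0 := by
      intro i
      show (if h : ((Fin.castAdd n i : Fin (n+n)):ℕ) < n
          then max (x ⟨((Fin.castAdd n i : Fin (n+n)):ℕ), h⟩) 0
          else _) + s0 = max (x i) 0 + s0
      rw [dif_pos (show ((Fin.castAdd n i : Fin (n+n)):ℕ) < n from by
        rw [Fin.coe_castAdd]; exact i.isLt)]
      have hidxc : (⟨((Fin.castAdd n i : Fin (n+n)):ℕ),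
          by rw [Fin.coe_castAdd]; exact i.isLt⟩ : Fin n) = i := by
        apply Fin.ext
        show ((Fin.castAdd n i : Fin (n+n)):ℕ) = (i:ℕ)
        rw [Fin.coe_castAdd]
      rw [hidxc]
    have hynat : ∀ i : Fin n, y (Fin.natAdd n i) = max (-(x i)) 0 + s0 := by
      intro i
      show (if h : ((Fin.natAdd n i : Fin (n+n)):ℕ) < n
          then max (x ⟨((Fin.natAdd n i : Fin (n+n)):ℕ), h⟩) 0
          else max (-(x ⟨((Fin.natAdd n i : Fin (n+n)):ℕ) - n, _⟩)) 0) + s0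
          = max (-(x i)) 0 + s0
      rw [dif_neg (show ¬(((Fin.natAdd n i : Fin (n+n)):ℕ) < n) from by
        rw [Fin.coe_natAdd]; omega)]
      have hidx : (⟨((Fin.natAdd n i : Fin (n+n)):ℕ) - n,
          by have := (Fin.natAdd n i).isLt; omega⟩ : Fin n) = i := by
        apply Fin.ext
        show ((Fin.natAdd n i : Fin (n+n)):ℕ) - n = (i:ℕ)
        rw [Fin.coe_natAdd]; omega
      rw [hidx]
    have hysum : ∑ k, y k = 1 := by
      rw [Fin.sum_univ_add (f := y)]
      rw [Finset.sum_congr rfl (fun i _ => hycast i),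
        Finset.sum_congr rfl (fun i _ => hynat i)]
      rw [Finset.sum_add_distrib, Finset.sum_add_distrib, Finset.sum_const,
        Finset.card_univ, Fintype.card_fin, nsmul_eq_mul]
      have hcomb : ∑ i, max (x i) 0 + ∑ i, max (-(x i)) 0 = T := by
        rw [← Finset.sum_add_distrib]
        rw [hTdef]
        exact Finset.sum_congr rfl fun i _ => max_add_max_neg (x i)
      have hs0sum : (n:ℝ) * s0 + (n:ℝ) * s0 = 1 - T := by
        have : (n:ℝ) * s0 + (n:ℝ) * s0 = ((n:ℝ) + n) * s0 := by ring
        rw [this, hs0def, mul_div_cancel₀ _ (ne_of_gt hnpos)]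
      linarith [hcomb, hs0sum]
    refine ⟨y, (memQ_iff (n+n) y).2 ⟨hysum, fun k => ?_⟩, ?_⟩
    · have hyk : y k = (if h : (k:ℕ) < n then max (x ⟨(k:ℕ), h⟩) 0
          else max (-(x ⟨(k:ℕ) - n, by have := k.isLt; omega⟩)) 0) + s0 := rfl
      have hge : (0:ℝ) ≤ (if h : (k:ℕ) < n then max (x ⟨(k:ℕ), h⟩) 0
          else max (-(x ⟨(k:ℕ) - n, by have := k.isLt; omega⟩)) 0) := by
        by_cases h : (k:ℕ) < n
        · rw [dif_pos h]; exact le_max_right _ _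
        · rw [dif_neg h]; exact le_max_right _ _
      rw [hyk]
      linarith
    · funext j
      show (Mpr n).mulVecLin y j = x j
      rw [hmulVec]
      rw [Fin.sum_univ_add (f := fun k => wv n k j * y k)]
      have h1 : ∑ i, wv n (Fin.castAdd n i) j * y (Fin.castAdd n i)
          = y (Fin.castAdd n j) := by
        rw [Finset.sum_eq_single j]
        · rw [wv_cast]; simp
        · intro b _ hb; rw [wv_cast]; simp [Pi.single_apply, Ne.symm hb]
        · simp
      have h2 : ∑ i, wv n (Fin.natAdd n i) j * y (Fin.natAdd n i)
          = -(y (Fin.natAdd n j)) := by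
        rw [Finset.sum_eq_single j]
        · rw [wv_nat]; simp
        · intro b _ hb; rw [wv_nat]; simp [Pi.single_apply, Ne.symm hb]
        · simp
      rw [h1, h2, hycast j, hynat j]
      have := max_sub_max_neg (x j)
      linarith

lemma irredundantP (hn : 3 ≤ n) :
    Irredundant (APm n) 0 (BPm n) (fun _ => 1) (Pset n) := by
  refine ⟨rfl, ?_, fun i => facetP n i (by omega)⟩
  rw [affineSpanP_top]
  ext x
  simp [APm_mulVec]

end Stmt9Aux

/-- For every `n ≥ 3`, there exist pointed polyhedra `P ⊂ ℝⁿ`, `Q ⊂ ℝᵐ` with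
irredundant descriptions and a linear `π` with `π(Q) = P` such that `C(P)` contains at least
`2^(n-1)` pairwise non-parallel vectors while every pairwise non-parallel subset of `C(Q)` has
cardinality at most `4n²`. -/
theorem stmt_9 (n : ℕ) (hn : 3 ≤ n) :
    ∃ (m pP qP pQ qQ : ℕ)
      (AP : Matrix (Fin pP) (Fin n) ℝ) (bP : Fin pP → ℝ)
      (BP : Matrix (Fin qP) (Fin n) ℝ) (dP : Fin qP → ℝ)
      (AQ : Matrix (Fin pQ) (Fin m) ℝ) (bQ : Fin pQ → ℝ)
      (BQ : Matrix (Fin qQ) (Fin m) ℝ) (dQ : Fin qQ → ℝ)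
      (P : Set (Fin n → ℝ)) (Q : Set (Fin m → ℝ))
      (π : (Fin m → ℝ) →ₗ[ℝ] (Fin n → ℝ)),
      Irredundant AP bP BP dP P ∧ Irredundant AQ bQ BQ dQ Q ∧
      PointedSet P ∧ PointedSet Q ∧
      (fun x => π x) '' Q = P ∧
      (∃ S : Set (Fin n → ℝ), S ⊆ circuits AP BP ∧ S.Finite ∧ 2 ^ (n - 1) ≤ S.ncard ∧
        S.Pairwise fun u v => ¬ ∃ c : ℝ, u = c • v) ∧
      (∀ S : Set (Fin m → ℝ), S ⊆ circuits AQ BQ →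
        (S.Pairwise fun u v => ¬ ∃ c : ℝ, u = c • v) →
        S.Finite ∧ S.ncard ≤ 4 * n ^ 2) := by
  classical
  refine ⟨n + n, 0, 2 ^ n, 1, n + n,
    Stmt9Aux.APm n, 0, Stmt9Aux.BPm n, (fun _ => 1),
    Stmt9Aux.AQm (n+n), (fun _ => 1), Stmt9Aux.BQm (n+n), 0,
    Stmt9Aux.Pset n, Stmt9Aux.Qset (n+n),
    (Stmt9Aux.Mpr n).mulVecLin, ?_, ?_, ?_, ?_, ?_, ?_, ?_⟩
  · exact Stmt9Aux.irredundantP hn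
  · exact Stmt9Aux.irredundantQ (n+n) (by omega)
  · exact Stmt9Aux.pointedP n
  · exact Stmt9Aux.pointedQ (n+n)
  · exact Stmt9Aux.proj_image hn
  · refine ⟨Set.range (Stmt9Aux.FF n), ?_, Set.finite_range _,
      Stmt9Aux.SP_card hn, Stmt9Aux.SP_pairwise hn⟩
    rintro g ⟨p, rfl⟩
    exact Stmt9Aux.FF_circuit hn p
  · intro S hS hpair
    have hb := Stmt9Aux.boundQ (n+n) S hS hpair
    refine ⟨hb.1, le_trans hb.2 (le_of_eq (by ring))⟩
end
end

section
/- Let A ∈ ℝ^{p×n}, B ∈ ℝ^{q×n}, b ∈ ℝᵖ, d ∈ ℝ^q define a polyhedron with ker(A) ∩ ker(B) = {0}. Then a vector g ∈ ℝⁿ with Ag = b is a basic solution of the system Ax = b, Bx ≤ d if and only if supp(Bg − d) is inclusion-minimal in the family {supp(By − d) : y ∈ ℝⁿ, Ay = b}, where supp(z) = {i : z_i ≠ 0}. -/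
open Matrix

noncomputable section

lemma span_eq_top_of_dot {n : ℕ} (S : Set (Fin n → ℝ))
    (h : ∀ v : Fin n → ℝ, (∀ w ∈ S, w ⬝ᵥ v = 0) → v = 0) :
    Submodule.span ℝ S = ⊤ := by
  let e : EuclideanSpace ℝ (Fin n) ≃ₗ[ℝ] (Fin n → ℝ) :=
    (EuclideanSpace.equiv (Fin n) ℝ).toLinearEquiv
  set K : Submodule ℝ (EuclideanSpace ℝ (Fin n)) := Submodule.span ℝ (e ⁻¹' S) with hK
  have hKtop : K = ⊤ := by
    rw [← Submodule.orthogonal_eq_bot_iff]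
    rw [Submodule.eq_bot_iff]
    intro v hv
    have hv' : e v = 0 := by
      apply h
      intro w hw
      have hmem : e.symm w ∈ K := Submodule.subset_span (by
        simp only [Set.mem_preimage, LinearEquiv.apply_symm_apply]; exact hw)
      have := (Submodule.mem_orthogonal K v).1 hv _ hmem
      have hdp : inner ℝ (e.symm w) v = w ⬝ᵥ (e v) := by
        simp only [PiLp.inner_apply, dotProduct, RCLike.inner_apply, starRingEnd_apply,
          star_trivial]
        exact Finset.sum_congr rfl fun x _ => by rw [mul_comm]; rfl
      rw [hdp] at this
      exact this
    simpa using congrArg e.symm hv'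
  have : Submodule.span ℝ S = K.map (e : EuclideanSpace ℝ (Fin n) →ₗ[ℝ] (Fin n → ℝ)) := by
    rw [Submodule.map_span]
    congr 1
    rw [LinearEquiv.coe_coe, Set.image_preimage_eq _ e.surjective]
  rw [this, hKtop, Submodule.map_top]
  exact LinearEquiv.range e

/-- For a pointed system `Ax = b, Bx ≤ d`, a vector `g` with `Ag = b` is a basic
solution iff `supp(Bg - d)` is inclusion-minimal in `{supp(By - d) : Ay = b}`. -/
theorem stmt_10 {p q n : ℕ}
    (A : Matrix (Fin p) (Fin n) ℝ) (b : Fin p → ℝ)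
    (B : Matrix (Fin q) (Fin n) ℝ) (d : Fin q → ℝ)
    (hpt : ∀ v : Fin n → ℝ, A.mulVec v = 0 → B.mulVec v = 0 → v = 0)
    (g : Fin n → ℝ) (hg : A.mulVec g = b) :
    IsBasicSolution A b B d g ↔
      ∀ y : Fin n → ℝ, A.mulVec y = b →
        {i | B.mulVec y i ≠ d i} ⊆ {i | B.mulVec g i ≠ d i} →
        {i | B.mulVec g i ≠ d i} ⊆ {i | B.mulVec y i ≠ d i} := by
  constructor
  · rintro ⟨-, hspan⟩ y hy hsub
    have hv : y - g = 0 := by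
      set v := y - g with hvdef
      let f : (Fin n → ℝ) →ₗ[ℝ] ℝ :=
        { toFun := fun w => w ⬝ᵥ v
          map_add' := fun a b => add_dotProduct a b v
          map_smul' := fun c a => smul_dotProduct c a v }
      have hle : Submodule.span ℝ (Set.range (fun i => A i) ∪
          (fun i => B i) '' {i | B.mulVec g i = d i}) ≤ LinearMap.ker f := by
        rw [Submodule.span_le]
        rintro w (⟨i, rfl⟩ | ⟨i, hi, rfl⟩)
        · have : A.mulVec v = 0 := by
            rw [hvdef, Matrix.mulVec_sub, hy, hg, sub_self]
          simpa [f, LinearMap.mem_ker, Matrix.mulVec] using congrFun this i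
        · have hyi : B.mulVec y i = d i := by
            by_contra hne
            exact (Set.mem_setOf_eq ▸ hsub hne) hi
          have hi' : B.mulVec g i = d i := hi
          have : B.mulVec v i = 0 := by
            rw [hvdef, Matrix.mulVec_sub]
            simp [hyi, hi']
          simpa [f, LinearMap.mem_ker, Matrix.mulVec] using this
      rw [hspan] at hle
      have hv0 : v ⬝ᵥ v = 0 := hle Submodule.mem_top
      exact dotProduct_self_eq_zero.mp hv0
    have : y = g := by rwa [sub_eq_zero] at hv
    simp [this]
  · intro h
    refine ⟨hg, ?_⟩
    apply span_eq_top_of_dot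
    intro v hv
    by_contra hvne
    have hAv : A.mulVec v = 0 := by
      funext i
      exact hv (A i) (Or.inl ⟨i, rfl⟩)
    have hBtight : ∀ i, B.mulVec g i = d i → B.mulVec v i = 0 := by
      intro i hi
      exact hv (B i) (Or.inr ⟨i, hi, rfl⟩)
    have hBv : B.mulVec v ≠ 0 := fun hBv => hvne (hpt v hAv hBv)
    obtain ⟨j, hj⟩ : ∃ j, B.mulVec v j ≠ 0 := by
      by_contra hc
      push_neg at hc
      exact hBv (funext hc)
    have hjg : B.mulVec g j ≠ d j := fun hjg => hj (hBtight j hjg)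
    set t : ℝ := (d j - B.mulVec g j) / (B.mulVec v j) with ht
    set y : Fin n → ℝ := g + t • v with hy
    have hyb : A.mulVec y = b := by
      rw [hy, Matrix.mulVec_add, Matrix.mulVec_smul, hAv, hg]
      simp
    have hBy : ∀ i, B.mulVec y i = B.mulVec g i + t * B.mulVec v i := by
      intro i
      rw [hy, Matrix.mulVec_add, Matrix.mulVec_smul]
      simp
    have hsub : {i | B.mulVec y i ≠ d i} ⊆ {i | B.mulVec g i ≠ d i} := by
      intro i hi
      simp only [Set.mem_setOf_eq] at hi ⊢
      intro hgi
      exact hi (by rw [hBy i, hBtight i hgi, hgi]; ring)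
    have := h y hyb hsub hjg
    simp only [Set.mem_setOf_eq] at this
    apply this
    rw [hBy j, ht, div_mul_cancel₀ _ hj]
    ring
end
end

section
/- Let A ∈ ℝ^{p×n}, B ∈ ℝ^{q×n}, b ∈ ℝᵖ, d ∈ ℝ^q define a polyhedron with ker(A) ∩ ker(B) = {0}, and consider its homogenization system in variables (t,x) ∈ ℝ × ℝⁿ with equality constraints Ax − tb = 0 and inequality constraints −t ≤ 0 and Bx − td ≤ 0. Then a nonzero vector (γ, g) ∈ ℝ × ℝⁿ is a circuit of this homogenization system if and only if either (i) γ = 0 and g ∈ C(A,B), or (ii) γ ≠ 0 and (1/γ)g is a basic solution of the system Ax = b, Bx ≤ d. -/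
open Matrix

noncomputable section

/-- Equality matrix `(A | -b)` of the homogenization, acting on vectors `(t, x)`. -/
def homEqMat {p n : ℕ} (A : Matrix (Fin p) (Fin n) ℝ) (b : Fin p → ℝ) :
    Matrix (Fin p) (Unit ⊕ Fin n) ℝ :=
  Matrix.of fun i => Sum.elim (fun _ => -b i) (fun j => A i j)

/-- Inequality matrix of the homogenization: the row `(-1, 0)` together with rows `(−dᵢ | Bᵢ)`. -/
def homIneqMat {q n : ℕ} (B : Matrix (Fin q) (Fin n) ℝ) (d : Fin q → ℝ) :
    Matrix (Unit ⊕ Fin q) (Unit ⊕ Fin n) ℝ :=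
  Matrix.of (Sum.elim
    (fun _ => Sum.elim (fun _ => (-1 : ℝ)) (fun _ => 0))
    (fun i => Sum.elim (fun _ => -d i) (fun j => B i j)))

set_option linter.unusedVariables false

lemma sum_elim_eq_zero_iff {n : ℕ} {δ : ℝ} {y : Fin n → ℝ} :
    Sum.elim (fun _ : Unit => δ) y = 0 ↔ δ = 0 ∧ y = 0 := by
  constructor
  · intro h
    exact ⟨congrFun h (Sum.inl ()), funext fun i => congrFun h (Sum.inr i)⟩
  · rintro ⟨rfl, rfl⟩; funext j; cases j <;> rfl

lemma homEq_mulVec {p n : ℕ} (A : Matrix (Fin p) (Fin n) ℝ) (b : Fin p → ℝ)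
    (δ : ℝ) (y : Fin n → ℝ) (i : Fin p) :
    (homEqMat A b).mulVec (Sum.elim (fun _ => δ) y) i = A.mulVec y i - δ * b i := by
  simp [homEqMat, Matrix.mulVec, dotProduct, Fintype.sum_sum_type]
  ring

lemma homIneq_mulVec_inl {q n : ℕ} (B : Matrix (Fin q) (Fin n) ℝ) (d : Fin q → ℝ)
    (δ : ℝ) (y : Fin n → ℝ) (u : Unit) :
    (homIneqMat B d).mulVec (Sum.elim (fun _ => δ) y) (Sum.inl u) = -δ := by
  simp [homIneqMat, Matrix.mulVec, dotProduct, Fintype.sum_sum_type]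

lemma homIneq_mulVec_inr {q n : ℕ} (B : Matrix (Fin q) (Fin n) ℝ) (d : Fin q → ℝ)
    (δ : ℝ) (y : Fin n → ℝ) (i : Fin q) :
    (homIneqMat B d).mulVec (Sum.elim (fun _ => δ) y) (Sum.inr i) = B.mulVec y i - δ * d i := by
  simp [homIneqMat, Matrix.mulVec, dotProduct, Fintype.sum_sum_type]
  ring

lemma hom_supp_subset_iff {q n : ℕ} (B : Matrix (Fin q) (Fin n) ℝ) (d : Fin q → ℝ)
    (δ δ' : ℝ) (y y' : Fin n → ℝ) :
    ({j | (homIneqMat B d).mulVec (Sum.elim (fun _ => δ) y) j ≠ 0} ⊆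
      {j | (homIneqMat B d).mulVec (Sum.elim (fun _ => δ') y') j ≠ 0}) ↔
    ((δ ≠ 0 → δ' ≠ 0) ∧
      ∀ i, B.mulVec y i - δ * d i ≠ 0 → B.mulVec y' i - δ' * d i ≠ 0) := by
  constructor
  · intro h
    constructor
    · intro hδ
      have h1 : Sum.inl () ∈ {j | (homIneqMat B d).mulVec (Sum.elim (fun _ => δ) y) j ≠ 0} := by
        simp [Set.mem_setOf_eq, homIneq_mulVec_inl, hδ]
      have := h h1
      simpa [Set.mem_setOf_eq, homIneq_mulVec_inl] using this
    · intro i hi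
      have h1 : Sum.inr i ∈ {j | (homIneqMat B d).mulVec (Sum.elim (fun _ => δ) y) j ≠ 0} := by
        simpa [Set.mem_setOf_eq, homIneq_mulVec_inr] using hi
      have := h h1
      simpa [Set.mem_setOf_eq, homIneq_mulVec_inr] using this
  · rintro ⟨h1, h2⟩ j hj
    cases j with
    | inl u =>
      simp only [Set.mem_setOf_eq, homIneq_mulVec_inl, ne_eq, neg_eq_zero] at hj ⊢
      exact h1 hj
    | inr i =>
      simp only [Set.mem_setOf_eq, homIneq_mulVec_inr] at hj ⊢
      exact h2 i hj

lemma hom_circuit_iff {p q n : ℕ} (A : Matrix (Fin p) (Fin n) ℝ) (b : Fin p → ℝ)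
    (B : Matrix (Fin q) (Fin n) ℝ) (d : Fin q → ℝ) (γ : ℝ) (g : Fin n → ℝ) :
    Sum.elim (fun _ : Unit => γ) g ∈ circuits (homEqMat A b) (homIneqMat B d) ↔
    ((∀ i, A.mulVec g i = γ * b i) ∧ ¬(γ = 0 ∧ g = 0) ∧
      ∀ (δ : ℝ) (y : Fin n → ℝ), (∀ i, A.mulVec y i = δ * b i) → ¬(δ = 0 ∧ y = 0) →
        ((δ ≠ 0 → γ ≠ 0) ∧ ∀ i, B.mulVec y i - δ * d i ≠ 0 → B.mulVec g i - γ * d i ≠ 0) →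
        ((γ ≠ 0 → δ ≠ 0) ∧ ∀ i, B.mulVec g i - γ * d i ≠ 0 → B.mulVec y i - δ * d i ≠ 0)) := by
  have hEq : ∀ (δ : ℝ) (y : Fin n → ℝ),
      (homEqMat A b).mulVec (Sum.elim (fun _ => δ) y) = 0 ↔ ∀ i, A.mulVec y i = δ * b i := by
    intro δ y
    rw [funext_iff]
    apply forall_congr'
    intro i
    rw [homEq_mulVec, Pi.zero_apply, sub_eq_zero]
  constructor
  · rintro ⟨h1, h2, h3⟩
    refine ⟨(hEq γ g).1 h1, fun h => h2 (sum_elim_eq_zero_iff.2 h), ?_⟩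
    intro δ y hAy hyne hsub
    have := h3 (Sum.elim (fun _ => δ) y) ((hEq δ y).2 hAy)
      (fun h => hyne (sum_elim_eq_zero_iff.1 h))
      ((hom_supp_subset_iff B d δ γ y g).2 hsub)
    exact (hom_supp_subset_iff B d γ δ g y).1 this
  · rintro ⟨h1, h2, h3⟩
    refine ⟨(hEq γ g).2 h1, fun h => h2 (sum_elim_eq_zero_iff.1 h), ?_⟩
    intro y hAy hyne hsub
    have hy : y = Sum.elim (fun _ => y (Sum.inl ())) (y ∘ Sum.inr) := by
      funext j; cases j with
      | inl u => rfl
      | inr i => rfl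
    rw [hy] at hAy hyne hsub ⊢
    have := h3 (y (Sum.inl ())) (y ∘ Sum.inr) ((hEq _ _).1 hAy)
      (fun h => hyne (sum_elim_eq_zero_iff.2 h))
      ((hom_supp_subset_iff B d _ γ _ g).1 hsub)
    exact (hom_supp_subset_iff B d γ _ g _).2 this

lemma dot_eq_zero_of_span_top {n : ℕ} {S : Set (Fin n → ℝ)}
    (h : Submodule.span ℝ S = ⊤) {z : Fin n → ℝ}
    (hz : ∀ s ∈ S, s ⬝ᵥ z = 0) : z = 0 := by
  have hz' : ∀ w ∈ Submodule.span ℝ S, w ⬝ᵥ z = 0 := by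
    intro w hw
    induction hw using Submodule.span_induction with
    | mem s hs => exact hz s hs
    | zero => simp
    | add x y _ _ hx hy => rw [add_dotProduct, hx, hy, add_zero]
    | smul c x _ hx => rw [smul_dotProduct, hx, smul_zero]
  exact dotProduct_self_eq_zero.1 (hz' z (h ▸ Submodule.mem_top))

lemma exists_dot_eq_zero {n : ℕ} {S : Set (Fin n → ℝ)}
    (h : Submodule.span ℝ S ≠ ⊤) :
    ∃ z : Fin n → ℝ, z ≠ 0 ∧ ∀ s ∈ S, s ⬝ᵥ z = 0 := by
  obtain ⟨f, hf0, hf⟩ := Submodule.exists_dual_map_eq_bot_of_lt_top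
    (p := Submodule.span ℝ S) (lt_top_iff_ne_top.2 h) inferInstance
  refine ⟨fun i => f (fun j => if i = j then 1 else 0), ?_, ?_⟩
  · intro hz
    apply hf0
    apply LinearMap.ext; intro x
    rw [LinearMap.pi_apply_eq_sum_univ f x]
    have : ∀ i, f (fun j => if i = j then 1 else 0) = 0 := fun i => congrFun hz i
    simp [this]
  · intro s hs
    have hfs : f s = 0 := by
      have : f s ∈ Submodule.map f (Submodule.span ℝ S) :=
        Submodule.mem_map_of_mem (Submodule.subset_span hs)
      rw [hf] at this
      simpa using this
    rw [dotProduct]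
    rw [LinearMap.pi_apply_eq_sum_univ f s] at hfs
    simpa [smul_eq_mul] using hfs

/-- For a pointed system, a nonzero `(γ, g)` is a circuit of the homogenization
iff either `γ = 0` and `g ∈ C(A,B)`, or `γ ≠ 0` and `(1/γ)g` is a basic solution. -/
theorem stmt_11 {p q n : ℕ}
    (A : Matrix (Fin p) (Fin n) ℝ) (b : Fin p → ℝ)
    (B : Matrix (Fin q) (Fin n) ℝ) (d : Fin q → ℝ)
    (hpt : ∀ v : Fin n → ℝ, A.mulVec v = 0 → B.mulVec v = 0 → v = 0)
    (γ : ℝ) (g : Fin n → ℝ)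
    (hne : Sum.elim (fun _ : Unit => γ) g ≠ 0) :
    Sum.elim (fun _ : Unit => γ) g ∈ circuits (homEqMat A b) (homIneqMat B d) ↔
      (γ = 0 ∧ g ∈ circuits A B) ∨
      (γ ≠ 0 ∧ IsBasicSolution A b B d (γ⁻¹ • g)) := by
  rw [hom_circuit_iff]
  have hne' : ¬(γ = 0 ∧ g = 0) := fun h => hne (sum_elim_eq_zero_iff.2 h)
  by_cases hγ : γ = 0
  · subst hγ
    have hg0 : g ≠ 0 := fun h => hne' ⟨rfl, h⟩
    constructor
    · rintro ⟨h1, _, h3⟩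
      left
      refine ⟨rfl, funext fun i => by simpa using h1 i, hg0, ?_⟩
      intro y hAy hy hsub
      have := h3 0 y (fun i => by simp [hAy]) (fun h => hy h.2)
        ⟨fun h => absurd rfl h, fun i hi => by
          simpa using hsub (by simpa using hi)⟩
      intro i hi
      simpa using this.2 i (by simpa using hi)
    · rintro (⟨_, hc⟩ | ⟨h0, _⟩)
      · obtain ⟨h1, _, h3⟩ := hc
        refine ⟨fun i => by simp [h1], hne', ?_⟩
        intro δ y hAy hyne hd
        obtain ⟨hd1, hd2⟩ := hd
        have hδ : δ = 0 := by by_contra h; exact (hd1 h) rfl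
        subst hδ
        have hy0 : y ≠ 0 := fun h => hyne ⟨rfl, h⟩
        have hAy' : A.mulVec y = 0 := funext fun i => by simpa using hAy i
        have hsub : {i | B.mulVec y i ≠ 0} ⊆ {i | B.mulVec g i ≠ 0} := by
          intro i hi
          simpa using hd2 i (by simpa using hi)
        have := h3 y hAy' hy0 hsub
        exact ⟨fun h => absurd rfl h, fun i hi => by simpa using this (by simpa using hi)⟩
      · exact absurd rfl h0
  · have hT : {i | B.mulVec (γ⁻¹ • g) i = d i} = {i | B.mulVec g i = γ * d i} := by
      ext i
      rw [Set.mem_setOf_eq, Set.mem_setOf_eq, Matrix.mulVec_smul]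
      simp only [Pi.smul_apply, smul_eq_mul]
      rw [inv_mul_eq_iff_eq_mul₀ hγ]
    have hA1 : A.mulVec (γ⁻¹ • g) = b ↔ ∀ i, A.mulVec g i = γ * b i := by
      rw [Matrix.mulVec_smul, funext_iff]
      apply forall_congr'
      intro i
      simp only [Pi.smul_apply, smul_eq_mul]
      rw [inv_mul_eq_iff_eq_mul₀ hγ]
    constructor
    · rintro ⟨h1, _, h3⟩
      right
      refine ⟨hγ, hA1.2 h1, ?_⟩
      rw [hT]
      by_contra hspan
      obtain ⟨z, hz0, hz⟩ := exists_dot_eq_zero hspan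
      have hAz : ∀ i, A.mulVec z i = 0 := fun i => hz (A i) (Or.inl ⟨i, rfl⟩)
      have hBz : ∀ i, B.mulVec g i = γ * d i → B.mulVec z i = 0 :=
        fun i hi => hz (B i) (Or.inr ⟨i, hi, rfl⟩)
      have := h3 0 z (fun i => by simp [hAz i]) (fun h => hz0 h.2)
        ⟨fun h => absurd rfl h, fun i hi => by
          intro h0
          refine hi ?_
          simp only [zero_mul, sub_zero]
          exact hBz i (sub_eq_zero.1 h0)⟩
      exact (this.1 hγ) rfl
    · rintro (⟨h0, _⟩ | ⟨_, hb⟩)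
      · exact absurd h0 hγ
      obtain ⟨hb1, hspan⟩ := hb
      rw [hT] at hspan
      have h1 : ∀ i, A.mulVec g i = γ * b i := hA1.1 hb1
      refine ⟨h1, hne', ?_⟩
      intro δ y hAy hyne hd
      obtain ⟨_, hsub⟩ := hd
      set z : Fin n → ℝ := γ • y - δ • g with hzdef
      have hBzv : ∀ i, B.mulVec z i = γ * B.mulVec y i - δ * B.mulVec g i := by
        intro i
        simp [hzdef, Matrix.mulVec_sub, Matrix.mulVec_smul]
      have hz : z = 0 := by
        apply dot_eq_zero_of_span_top hspan
        rintro s (⟨i, rfl⟩ | ⟨i, hi, rfl⟩)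
        · show A.mulVec z i = 0
          have hv : A.mulVec z i = γ * A.mulVec y i - δ * A.mulVec g i := by
            simp [hzdef, Matrix.mulVec_sub, Matrix.mulVec_smul]
          rw [hv, hAy i, h1 i]
          ring
        · show B.mulVec z i = 0
          have hi' : B.mulVec g i = γ * d i := hi
          have hyi : B.mulVec y i = δ * d i := by
            by_contra h
            exact (hsub i (sub_ne_zero.2 h)) (sub_eq_zero.2 hi')
          rw [hBzv i, hyi, hi']
          ring
      have hδ : δ ≠ 0 := by
        intro h0
        subst h0
        apply hyne
        refine ⟨rfl, funext fun j => ?_⟩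
        have hj := congrFun hz j
        simp only [hzdef, Pi.sub_apply, Pi.smul_apply, smul_eq_mul, zero_mul,
          sub_zero, Pi.zero_apply] at hj
        exact mul_left_cancel₀ hγ (by simpa using hj)
      refine ⟨fun _ => hδ, ?_⟩
      intro i hi h0
      have hBy : B.mulVec y i = δ * d i := sub_eq_zero.1 h0
      have hBz0 : B.mulVec z i = 0 := by rw [hz]; simp
      rw [hBzv i, hBy] at hBz0
      have hcc : δ * (γ * d i) = δ * B.mulVec g i := by linear_combination hBz0
      have := mul_left_cancel₀ hδ hcc
      exact hi (by rw [← this]; ring)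
end
end

section
/- Let n ≥ 2 and δ ∈ (1/2, 1), and let Q'_n = {x ∈ ℝⁿ : yᵀx ≤ 1 for all y ∈ {−1,1}ⁿ, and −δ ≤ x_i ≤ δ for all i ∈ [n]}. Then Q'_n has exactly 4n(n−1) vertices, and every point of {−δ, δ}ⁿ is a basic solution of the defining system (whose inequality rows are yᵀx ≤ 1 for y ∈ {−1,1}ⁿ together with x_i ≤ δ and −x_i ≤ δ for i ∈ [n], with no equality rows). -/
open Matrix

noncomputable section

/-- The inequality matrix of the cropped cross-polytope: rows `yᵀ` for `y ∈ {-1,1}ⁿ`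
(indexed by `Fin n → Bool`), together with rows `eᵢᵀ` and `-eᵢᵀ`. -/
def cropB (n : ℕ) : Matrix ((Fin n → Bool) ⊕ (Fin n ⊕ Fin n)) (Fin n) ℝ :=
  Matrix.of (Sum.elim
    (fun y j => if y j then 1 else -1)
    (Sum.elim (fun i j => if j = i then 1 else 0) (fun i j => if j = i then -1 else 0)))

/-- Right-hand sides: `1` for the cross-polytope rows, `δ` for the box rows. -/
def cropd (n : ℕ) (δ : ℝ) : ((Fin n → Bool) ⊕ (Fin n ⊕ Fin n)) → ℝ :=
  Sum.elim (fun _ => 1) (fun _ => δ)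

section
variable {n : ℕ}

lemma cropB_inl (n : ℕ) (y : Fin n → Bool) (x : Fin n → ℝ) :
    (cropB n).mulVec x (Sum.inl y) = ∑ j, (if y j then x j else -x j) := by
  simp only [cropB, Matrix.mulVec, dotProduct, Matrix.of_apply, Sum.elim_inl]
  apply Finset.sum_congr rfl; intro j _
  split <;> ring

lemma cropB_inr₁ (n : ℕ) (i : Fin n) (x : Fin n → ℝ) :
    (cropB n).mulVec x (Sum.inr (Sum.inl i)) = x i := by
  simp [cropB, Matrix.mulVec, dotProduct, ite_mul]

lemma cropB_inr₂ (n : ℕ) (i : Fin n) (x : Fin n → ℝ) :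
    (cropB n).mulVec x (Sum.inr (Sum.inr i)) = -x i := by
  simp [cropB, Matrix.mulVec, dotProduct, ite_mul]

lemma mem_poly_iff (n : ℕ) (δ : ℝ) (x : Fin n → ℝ) :
    x ∈ polySet (0 : Matrix (Fin 0) (Fin n) ℝ) 0 (cropB n) (cropd n δ) ↔
      (∑ j, |x j|) ≤ 1 ∧ ∀ i, |x i| ≤ δ := by
  constructor
  · rintro ⟨-, h⟩
    constructor
    · have := h (Sum.inl (fun j => decide (0 ≤ x j)))
      rw [cropB_inl] at this
      simp only [cropd, Sum.elim_inl] at this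
      have : (∑ j, |x j|) = ∑ j, (if decide (0 ≤ x j) then x j else -x j) := by
        apply Finset.sum_congr rfl; intro j _
        by_cases hj : 0 ≤ x j
        · simp [hj, abs_of_nonneg hj]
        · simp [hj, abs_of_neg (lt_of_not_ge hj)]
      linarith [this ▸ ‹(∑ j, (if decide (0 ≤ x j) then x j else -x j)) ≤ 1›]
    · intro i
      have h1 := h (Sum.inr (Sum.inl i)); rw [cropB_inr₁] at h1
      have h2 := h (Sum.inr (Sum.inr i)); rw [cropB_inr₂] at h2
      simp only [cropd, Sum.elim_inr] at h1 h2
      exact abs_le.2 ⟨by linarith, h1⟩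
  · rintro ⟨h1, h2⟩
    refine ⟨by simp [Matrix.zero_mulVec], ?_⟩
    rintro (y | i | i)
    · rw [cropB_inl]
      simp only [cropd, Sum.elim_inl]
      calc (∑ j, if y j then x j else -x j) ≤ ∑ j, |x j| := by
            apply Finset.sum_le_sum; intro j _
            split
            · exact le_abs_self _
            · exact neg_le_abs _
        _ ≤ 1 := h1
    · rw [cropB_inr₁]; exact le_trans (le_abs_self _) (h2 i)
    · rw [cropB_inr₂]; exact le_trans (neg_le_abs _) (h2 i)

def sg (b : Bool) : ℝ := if b then 1 else -1

lemma sg_mul_self (b : Bool) : sg b * sg b = 1 := by cases b <;> simp [sg]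
lemma abs_sg (b : Bool) : |sg b| = 1 := by cases b <;> simp [sg]
lemma sg_ne_zero (b : Bool) : sg b ≠ 0 := by cases b <;> simp [sg]

def vtx (n : ℕ) (δ : ℝ) (i j : Fin n) (s t : Bool) : Fin n → ℝ :=
  fun k => if k = i then sg s * δ else if k = j then sg t * (1 - δ) else 0

lemma sum_split2 (f : Fin n → ℝ) (i j : Fin n) (hij : i ≠ j) :
    ∑ k, f k = (∑ k ∈ Finset.univ \ {i, j}, f k) + f i + f j := by
  have h1 : ∑ k, f k = (∑ k ∈ Finset.univ \ {i}, f k) + f i :=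
    (Finset.sum_eq_sum_sdiff_singleton_add (Finset.mem_univ i) f)
  have hj : j ∈ Finset.univ \ {i} := by simp [hij.symm]
  have h2 : ∑ k ∈ Finset.univ \ {i}, f k
      = (∑ k ∈ (Finset.univ \ {i}) \ {j}, f k) + f j :=
    (Finset.sum_eq_sum_sdiff_singleton_add hj f)
  have h3 : (Finset.univ \ {i}) \ {j} = Finset.univ \ {i, j} := by
    ext k; by_cases h : k = i <;> by_cases h2 : k = j <;> simp [h, h2]
  rw [h1, h2, h3]; ring

lemma vtx_apply_i (δ : ℝ) (i j : Fin n) (s t : Bool) : vtx n δ i j s t i = sg s * δ := by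
  simp [vtx]

lemma vtx_apply_j (δ : ℝ) {i j : Fin n} (hij : i ≠ j) (s t : Bool) :
    vtx n δ i j s t j = sg t * (1 - δ) := by
  simp [vtx, hij.symm]

lemma vtx_apply_other (δ : ℝ) {i j k : Fin n} (h1 : k ≠ i) (h2 : k ≠ j) (s t : Bool) :
    vtx n δ i j s t k = 0 := by
  simp [vtx, h1, h2]

lemma abs_vtx_i (δ : ℝ) (hδ : 0 < δ) (i j : Fin n) (s t : Bool) : |vtx n δ i j s t i| = δ := by
  rw [vtx_apply_i, abs_mul, abs_sg, abs_of_pos hδ, one_mul]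

lemma abs_vtx_j (δ : ℝ) (hδ : δ < 1) {i j : Fin n} (hij : i ≠ j) (s t : Bool) :
    |vtx n δ i j s t j| = 1 - δ := by
  rw [vtx_apply_j δ hij, abs_mul, abs_sg, abs_of_pos (by linarith), one_mul]

lemma sum_abs_vtx (δ : ℝ) (hδ₀ : 0 < δ) (hδ₂ : δ < 1) {i j : Fin n} (hij : i ≠ j)
    (s t : Bool) : ∑ k, |vtx n δ i j s t k| = 1 := by
  rw [sum_split2 _ i j hij]
  rw [abs_vtx_i δ hδ₀, abs_vtx_j δ hδ₂ hij]
  have : ∑ k ∈ Finset.univ \ {i, j}, |vtx n δ i j s t k| = 0 := by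
    apply Finset.sum_eq_zero
    intro k hk
    simp only [Finset.mem_sdiff, Finset.mem_insert, Finset.mem_singleton] at hk
    rw [vtx_apply_other δ (fun h => hk.2 (Or.inl h)) (fun h => hk.2 (Or.inr h)), abs_zero]
  rw [this]; ring

lemma vtx_mem (δ : ℝ) (hδ₁ : 1/2 < δ) (hδ₂ : δ < 1) {i j : Fin n} (hij : i ≠ j)
    (s t : Bool) :
    vtx n δ i j s t ∈ polySet (0 : Matrix (Fin 0) (Fin n) ℝ) 0 (cropB n) (cropd n δ) := by
  rw [mem_poly_iff]
  refine ⟨le_of_eq (sum_abs_vtx δ (by linarith) hδ₂ hij s t), ?_⟩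
  intro k
  by_cases h1 : k = i
  · subst h1; rw [abs_vtx_i δ (by linarith)]
  · by_cases h2 : k = j
    · subst h2; rw [abs_vtx_j δ hδ₂ hij]; linarith
    · rw [vtx_apply_other δ h1 h2, abs_zero]; linarith

def cvec (n : ℕ) (i j : Fin n) (s t : Bool) : Fin n → ℝ :=
  fun k => if k = i then 2 * sg s else if k = j then sg t else 0

lemma cvec_dot (i j : Fin n) (hij : i ≠ j) (s t : Bool) (x : Fin n → ℝ) :
    cvec n i j s t ⬝ᵥ x = 2 * sg s * x i + sg t * x j := by
  show ∑ k, cvec n i j s t k * x k = _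
  rw [sum_split2 _ i j hij]
  have h0 : ∑ k ∈ Finset.univ \ {i, j}, cvec n i j s t k * x k = 0 := by
    apply Finset.sum_eq_zero
    intro k hk
    simp only [Finset.mem_sdiff, Finset.mem_insert, Finset.mem_singleton] at hk
    have h1 : k ≠ i := fun h => hk.2 (Or.inl h)
    have h2 : k ≠ j := fun h => hk.2 (Or.inr h)
    simp [cvec, h1, h2]
  rw [h0]
  simp [cvec, hij.symm]

lemma sg_mul_le_abs (b : Bool) (a : ℝ) : sg b * a ≤ |a| := by
  cases b <;> simp [sg] <;> [exact neg_le_abs a; exact le_abs_self a]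

lemma abs_pair_le (v : Fin n → ℝ) (i j : Fin n) (hij : i ≠ j) :
    |v i| + |v j| ≤ ∑ k, |v k| := by
  rw [sum_split2 (fun k => |v k|) i j hij]
  have : (0:ℝ) ≤ ∑ k ∈ Finset.univ \ {i, j}, |v k| :=
    Finset.sum_nonneg (fun k _ => abs_nonneg _)
  linarith

lemma dot_le (δ : ℝ) (hδ₁ : 1/2 < δ) {i j : Fin n} (hij : i ≠ j) (s t : Bool)
    (x : Fin n → ℝ)
    (hx : x ∈ polySet (0 : Matrix (Fin 0) (Fin n) ℝ) 0 (cropB n) (cropd n δ)) :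
    cvec n i j s t ⬝ᵥ x ≤ 1 + δ := by
  obtain ⟨h1, h2⟩ := (mem_poly_iff n δ x).1 hx
  rw [cvec_dot i j hij]
  have hA : sg s * x i ≤ |x i| := sg_mul_le_abs s (x i)
  have hB : sg t * x j ≤ |x j| := sg_mul_le_abs t (x j)
  have hP := abs_pair_le x i j hij
  have := h2 i
  linarith

lemma dot_eq_imp (δ : ℝ) (hδ₁ : 1/2 < δ) (hδ₂ : δ < 1) {i j : Fin n} (hij : i ≠ j)
    (s t : Bool) (x : Fin n → ℝ)
    (hx : x ∈ polySet (0 : Matrix (Fin 0) (Fin n) ℝ) 0 (cropB n) (cropd n δ))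
    (heq : cvec n i j s t ⬝ᵥ x = 1 + δ) : x = vtx n δ i j s t := by
  obtain ⟨h1, h2⟩ := (mem_poly_iff n δ x).1 hx
  rw [cvec_dot i j hij] at heq
  have hA : sg s * x i ≤ |x i| := sg_mul_le_abs s (x i)
  have hB : sg t * x j ≤ |x j| := sg_mul_le_abs t (x j)
  have hP := abs_pair_le x i j hij
  have hi := h2 i
  -- forced equalities
  have eA : sg s * x i = δ := by linarith
  have eAB : sg s * x i + sg t * x j = 1 := by linarith
  have habsi : |x i| = δ := le_antisymm hi (by linarith)
  have habsj : |x j| = 1 - δ := by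
    have : sg t * x j = 1 - δ := by linarith
    have h3 : 1 - δ ≤ |x j| := by linarith
    have h4 : |x j| ≤ 1 - δ := by linarith
    linarith
  have exi : x i = sg s * δ := by
    rw [← eA, ← mul_assoc, sg_mul_self, one_mul]
  have et : sg t * x j = 1 - δ := by linarith
  have exj : x j = sg t * (1 - δ) := by
    rw [← et, ← mul_assoc, sg_mul_self, one_mul]
  have hrest : ∀ k, k ≠ i → k ≠ j → x k = 0 := by
    intro k hki hkj
    have hz : ∑ m ∈ Finset.univ \ {i, j}, |x m| = 0 := by
      have hsplit := sum_split2 (fun k => |x k|) i j hij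
      rw [habsi, habsj] at hsplit
      have hnn : (0:ℝ) ≤ ∑ m ∈ Finset.univ \ {i, j}, |x m| :=
        Finset.sum_nonneg (fun m _ => abs_nonneg _)
      linarith
    have hk : k ∈ Finset.univ \ {i, j} := by simp [hki, hkj]
    have := (Finset.sum_eq_zero_iff_of_nonneg (fun m _ => abs_nonneg (x m))).1 hz k hk
    exact abs_eq_zero.1 this
  funext k
  by_cases hki : k = i
  · subst hki; rw [vtx_apply_i]; exact exi
  · by_cases hkj : k = j
    · subst hkj; rw [vtx_apply_j δ hij]; exact exj
    · rw [vtx_apply_other δ hki hkj]; exact hrest k hki hkj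

lemma special_is_vertex (δ : ℝ) (hδ₁ : 1/2 < δ) (hδ₂ : δ < 1) {i j : Fin n}
    (hij : i ≠ j) (s t : Bool) :
    IsVertex (polySet (0 : Matrix (Fin 0) (Fin n) ℝ) 0 (cropB n) (cropd n δ))
      (vtx n δ i j s t) := by
  right
  refine ⟨cvec n i j s t, 1 + δ, fun y hy => dot_le δ hδ₁ hij s t y hy, ?_, ?_⟩
  · refine ⟨vtx n δ i j s t, vtx_mem δ hδ₁ hδ₂ hij s t, ?_⟩
    rw [cvec_dot i j hij, vtx_apply_i, vtx_apply_j δ hij]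
    have hs := sg_mul_self s
    have ht := sg_mul_self t
    nlinarith
  · ext x
    simp only [Set.mem_singleton_iff, Set.mem_setOf_eq]
    constructor
    · rintro rfl
      refine ⟨vtx_mem δ hδ₁ hδ₂ hij s t, ?_⟩
      rw [cvec_dot i j hij, vtx_apply_i, vtx_apply_j δ hij]
      have hs := sg_mul_self s
      have ht := sg_mul_self t
      nlinarith
    · rintro ⟨hxP, hxe⟩
      exact dot_eq_imp δ hδ₁ hδ₂ hij s t x hxP hxe

lemma not_vertex_of_perturb {P : Set (Fin n → ℝ)} {v d : Fin n → ℝ} (hd : d ≠ 0)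
    (h1 : v + d ∈ P) (h2 : v - d ∈ P) : ¬ IsVertex P v := by
  intro hV
  rcases hV with hF | ⟨c, s, hub, -, hFe⟩
  · apply hd
    have e1 : v + d = v := by rw [← Set.mem_singleton_iff, hF]; exact h1
    have : d = 0 := by
      funext k
      have := congrFun e1 k
      simp only [Pi.add_apply] at this
      simp only [Pi.zero_apply]
      linarith
    exact this
  · have hv : v ∈ ({v} : Set (Fin n → ℝ)) := rfl
    rw [hFe] at hv
    obtain ⟨hvP, hvs⟩ := hv
    have hd1 := hub _ h1
    have hd2 := hub _ h2
    rw [dotProduct_add] at hd1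
    rw [dotProduct_sub] at hd2
    have hcd : c ⬝ᵥ d = 0 := by linarith
    have : v + d ∈ ({v} : Set (Fin n → ℝ)) := by
      rw [hFe]
      exact ⟨h1, by rw [dotProduct_add, hcd, hvs, add_zero]⟩
    apply hd
    funext k
    have := congrFun this k
    simp only [Pi.add_apply, Set.mem_singleton_iff] at this
    simp only [Pi.zero_apply]
    linarith

-- membership of a two-coordinate perturbation
lemma perturb_mem (δ : ℝ) (v : Fin n → ℝ)
    (hv : v ∈ polySet (0 : Matrix (Fin 0) (Fin n) ℝ) 0 (cropB n) (cropd n δ))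
    (w : Fin n → ℝ) {i j : Fin n} (hij : i ≠ j)
    (hw : ∀ k, k ≠ i → k ≠ j → w k = v k)
    (hbi : |w i| ≤ δ) (hbj : |w j| ≤ δ)
    (hsum : |w i| + |w j| ≤ |v i| + |v j| + (1 - ∑ k, |v k|)) :
    w ∈ polySet (0 : Matrix (Fin 0) (Fin n) ℝ) 0 (cropB n) (cropd n δ) := by
  obtain ⟨h1, h2⟩ := (mem_poly_iff n δ v).1 hv
  rw [mem_poly_iff]
  constructor
  · have hs1 := sum_split2 (fun k => |w k|) i j hij
    have hs2 := sum_split2 (fun k => |v k|) i j hij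
    have hr : ∑ k ∈ Finset.univ \ {i, j}, |w k| = ∑ k ∈ Finset.univ \ {i, j}, |v k| := by
      apply Finset.sum_congr rfl
      intro k hk
      simp only [Finset.mem_sdiff, Finset.mem_insert, Finset.mem_singleton] at hk
      rw [hw k (fun h => hk.2 (Or.inl h)) (fun h => hk.2 (Or.inr h))]
    rw [hs1, hr]
    rw [hs2] at h1 hsum
    linarith
  · intro k
    by_cases hki : k = i
    · subst hki; exact hbi
    · by_cases hkj : k = j
      · subst hkj; exact hbj
      · rw [hw k hki hkj]; exact h2 k

lemma abs_add_sgn (a ε : ℝ) (ha : a ≠ 0) (hε : 0 ≤ ε) :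
    |a + ε * (if 0 ≤ a then 1 else -1)| = |a| + ε := by
  split_ifs with h
  · have ha' : 0 < a := lt_of_le_of_ne h (Ne.symm ha)
    rw [abs_of_pos ha', abs_of_pos (by linarith)]; ring
  · push_neg at h
    rw [abs_of_neg h, abs_of_neg (by linarith)]; ring

lemma abs_sub_sgn (a ε : ℝ) (hε1 : 0 ≤ ε) (hε2 : ε ≤ |a|) :
    |a - ε * (if 0 ≤ a then 1 else -1)| = |a| - ε := by
  split_ifs with h
  · rw [abs_of_nonneg h] at *
    rw [abs_of_nonneg (by linarith)]; ring
  · push_neg at h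
    rw [abs_of_neg h] at *
    rw [abs_of_nonpos (by linarith)]; ring

lemma classify (hn : 2 ≤ n) (δ : ℝ) (hδ₁ : 1/2 < δ) (hδ₂ : δ < 1) (v : Fin n → ℝ)
    (hv : v ∈ polySet (0 : Matrix (Fin 0) (Fin n) ℝ) 0 (cropB n) (cropd n δ))
    (hnot : ∀ (i j : Fin n) (s t : Bool), i ≠ j → v ≠ vtx n δ i j s t) :
    ∃ d : Fin n → ℝ, d ≠ 0 ∧
      v + d ∈ polySet (0 : Matrix (Fin 0) (Fin n) ℝ) 0 (cropB n) (cropd n δ) ∧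
      v - d ∈ polySet (0 : Matrix (Fin 0) (Fin n) ℝ) 0 (cropB n) (cropd n δ) := by
  obtain ⟨hS, hbox⟩ := (mem_poly_iff n δ v).1 hv
  by_cases hS1 : ∑ k, |v k| < 1
  · -- some coordinate strictly inside the box
    have hex : ∃ i, |v i| < δ := by
      by_contra h
      push_neg at h
      have hpair := abs_pair_le v ⟨0, by omega⟩ ⟨1, by omega⟩ (by simp [Fin.ext_iff])
      have h0 := h ⟨0, by omega⟩
      have h1 := h ⟨1, by omega⟩
      linarith
    obtain ⟨i, hi⟩ := hex
    obtain ⟨j, hj⟩ : ∃ j : Fin n, j ≠ i := by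
      by_cases h0 : i = ⟨0, by omega⟩
      · exact ⟨⟨1, by omega⟩, by rw [h0]; simp [Fin.ext_iff]⟩
      · exact ⟨⟨0, by omega⟩, fun h => h0 h.symm⟩
    set ε := min (δ - |v i|) (1 - ∑ k, |v k|) with hε
    have hεpos : 0 < ε := lt_min (by linarith) (by linarith)
    refine ⟨fun k => if k = i then ε else 0, ?_, ?_, ?_⟩
    · intro h
      have := congrFun h i
      simp only [if_pos rfl, if_true, Pi.zero_apply] at this
      linarith
    · apply perturb_mem δ v hv _ (Ne.symm hj)
      · intro k hki _
        simp [Pi.add_apply, hki]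
      · simp only [Pi.add_apply, if_pos rfl, if_true]
        have := abs_add_le (v i) ε
        have : |v i + ε| ≤ |v i| + ε := by
          calc |v i + ε| ≤ |v i| + |ε| := abs_add_le _ _
            _ = |v i| + ε := by rw [abs_of_pos hεpos]
        have hε1 : ε ≤ δ - |v i| := min_le_left _ _
        linarith
      · simp only [Pi.add_apply, if_neg hj, add_zero]
        exact hbox j
      · simp only [Pi.add_apply, if_pos rfl, if_true, if_neg hj, add_zero]
        have h1 : |v i + ε| ≤ |v i| + ε := by
          calc |v i + ε| ≤ |v i| + |ε| := abs_add_le _ _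
            _ = |v i| + ε := by rw [abs_of_pos hεpos]
        have hε2 : ε ≤ 1 - ∑ k, |v k| := min_le_right _ _
        linarith
    · apply perturb_mem δ v hv _ (Ne.symm hj)
      · intro k hki _
        simp [Pi.sub_apply, hki]
      · simp only [Pi.sub_apply, if_pos rfl, if_true]
        have h1 : |v i - ε| ≤ |v i| + ε := by
          calc |v i - ε| = |v i + (-ε)| := by ring_nf
            _ ≤ |v i| + |(-ε)| := abs_add_le _ _
            _ = |v i| + ε := by rw [abs_neg, abs_of_pos hεpos]
        have hε2 : ε ≤ 1 - ∑ k, |v k| := min_le_right _ _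
        have hε1 : ε ≤ δ - |v i| := min_le_left _ _
        linarith
      · simp only [Pi.sub_apply, if_neg hj, sub_zero]
        exact hbox j
      · simp only [Pi.sub_apply, if_pos rfl, if_true, if_neg hj, sub_zero]
        have h1 : |v i - ε| ≤ |v i| + ε := by
          calc |v i - ε| = |v i + (-ε)| := by ring_nf
            _ ≤ |v i| + |(-ε)| := abs_add_le _ _
            _ = |v i| + ε := by rw [abs_neg, abs_of_pos hεpos]
        have hε2 : ε ≤ 1 - ∑ k, |v k| := min_le_right _ _
        linarith
  · -- total mass is 1
    have hSeq : ∑ k, |v k| = 1 := le_antisymm hS (not_lt.1 hS1)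
    set M := Finset.univ.filter (fun k => 0 < |v k| ∧ |v k| < δ) with hM
    by_cases hMc : 1 < M.card
    · -- two middle coordinates: trade mass between them
      obtain ⟨i, hiM, j, hjM, hij⟩ := Finset.one_lt_card.1 hMc
      rw [hM, Finset.mem_filter] at hiM hjM
      obtain ⟨-, hi1, hi2⟩ := hiM
      obtain ⟨-, hj1, hj2⟩ := hjM
      have hvi : v i ≠ 0 := fun h => by simp [h] at hi1
      have hvj : v j ≠ 0 := fun h => by simp [h] at hj1
      set sa : ℝ := if 0 ≤ v i then 1 else -1 with hsa
      set sb : ℝ := if 0 ≤ v j then 1 else -1 with hsb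
      set ε := min (min (|v i|) (δ - |v i|)) (min (|v j|) (δ - |v j|)) with hε
      have hεpos : 0 < ε := lt_min (lt_min hi1 (by linarith)) (lt_min hj1 (by linarith))
      have hε1 : ε ≤ |v i| := le_trans (min_le_left _ _) (min_le_left _ _)
      have hε2 : ε ≤ δ - |v i| := le_trans (min_le_left _ _) (min_le_right _ _)
      have hε3 : ε ≤ |v j| := le_trans (min_le_right _ _) (min_le_left _ _)
      have hε4 : ε ≤ δ - |v j| := le_trans (min_le_right _ _) (min_le_right _ _)
      have hai : |v i + ε * sa| = |v i| + ε := abs_add_sgn (v i) ε hvi hεpos.le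
      have hai' : |v i - ε * sa| = |v i| - ε := abs_sub_sgn (v i) ε hεpos.le hε1
      have haj : |v j + ε * sb| = |v j| + ε := abs_add_sgn (v j) ε hvj hεpos.le
      have haj' : |v j - ε * sb| = |v j| - ε := abs_sub_sgn (v j) ε hεpos.le hε3
      refine ⟨fun k => if k = i then ε * sa else if k = j then -(ε * sb) else 0, ?_, ?_, ?_⟩
      · intro h
        have := congrFun h i
        simp only [if_pos rfl, if_true, Pi.zero_apply] at this
        have hsane : sa ≠ 0 := by rw [hsa]; split <;> norm_num
        exact mul_ne_zero (ne_of_gt hεpos) hsane this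
      · apply perturb_mem δ v hv _ hij
        · intro k hki hkj
          simp [Pi.add_apply, hki, hkj]
        · simp only [Pi.add_apply, if_pos rfl, if_true]
          rw [hai]; linarith
        · simp only [Pi.add_apply, if_neg hij.symm, if_pos rfl, if_true]
          have : v j + -(ε * sb) = v j - ε * sb := by ring
          rw [this, haj']; linarith
        · simp only [Pi.add_apply, if_pos rfl, if_true, if_neg hij.symm]
          have : v j + -(ε * sb) = v j - ε * sb := by ring
          rw [this, hai, haj']; linarith
      · apply perturb_mem δ v hv _ hij
        · intro k hki hkj
          simp [Pi.sub_apply, hki, hkj]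
        · simp only [Pi.sub_apply, if_pos rfl, if_true]
          rw [hai']; linarith
        · simp only [Pi.sub_apply, if_neg hij.symm, if_pos rfl, if_true]
          have : v j - -(ε * sb) = v j + ε * sb := by ring
          rw [this, haj]; linarith
        · simp only [Pi.sub_apply, if_pos rfl, if_true, if_neg hij.symm]
          have : v j - -(ε * sb) = v j + ε * sb := by ring
          rw [this, hai', haj]; linarith
    · -- at most one middle coordinate: v must be a special point, contradiction
      exfalso
      have hMle : M.card ≤ 1 := not_lt.1 hMc
      set T := Finset.univ.filter (fun k => |v k| = δ) with hT
      have hsplit : ∑ k, |v k| = T.card * δ + ∑ k ∈ M, |v k| := by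
        rw [← Finset.sum_filter_add_sum_filter_not Finset.univ (fun k => |v k| = δ)
          (fun k => |v k|)]
        congr 1
        · rw [← hT]
          rw [Finset.sum_congr rfl (fun k hk => (Finset.mem_filter.1 hk).2)]
          rw [Finset.sum_const, nsmul_eq_mul]
        · symm
          apply Finset.sum_subset
          · intro k hk
            rw [hM, Finset.mem_filter] at hk
            simp only [Finset.mem_filter, Finset.mem_univ, true_and]
            exact ne_of_lt hk.2.2
          · intro k hk hkM
            simp only [Finset.mem_filter, Finset.mem_univ, true_and] at hk
            rw [hM] at hkM
            simp only [Finset.mem_filter, Finset.mem_univ, true_and, not_and, not_lt] at hkM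
            have hlt : |v k| < δ := lt_of_le_of_ne (hbox k) hk
            by_cases h0 : 0 < |v k|
            · exact absurd hlt (not_lt.2 (hkM h0))
            · linarith [abs_nonneg (v k), not_lt.1 h0]
      rcases Nat.le_one_iff_eq_zero_or_eq_one.1 hMle with hM0 | hM1
      · -- M empty : 1 = |T| δ, impossible
        rw [Finset.card_eq_zero.1 hM0, Finset.sum_empty, hSeq] at hsplit
        rcases Nat.lt_or_ge T.card 2 with ht | ht
        · have htc : T.card = 0 ∨ T.card = 1 := by omega
          rcases htc with ht0 | ht1
          · rw [ht0] at hsplit; norm_num at hsplit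
          · rw [ht1] at hsplit; norm_num at hsplit; linarith
        · have h2 : (2:ℝ) ≤ (T.card : ℝ) := by exact_mod_cast ht
          nlinarith
      · -- M = {j}
        obtain ⟨j, hMj⟩ := Finset.card_eq_one.1 hM1
        have hjM : j ∈ M := by rw [hMj]; exact Finset.mem_singleton_self j
        rw [hM, Finset.mem_filter] at hjM
        obtain ⟨-, hj1, hj2⟩ := hjM
        rw [hMj, Finset.sum_singleton, hSeq] at hsplit
        rcases Nat.lt_or_ge T.card 2 with ht | ht
        · have htc : T.card = 0 ∨ T.card = 1 := by omega
          rcases htc with ht0 | ht1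
          · rw [ht0] at hsplit
            simp at hsplit
            linarith
          · -- the special-point case
            obtain ⟨i, hTi⟩ := Finset.card_eq_one.1 ht1
            have hiT : i ∈ T := by rw [hTi]; exact Finset.mem_singleton_self i
            rw [hT, Finset.mem_filter] at hiT
            have hvi : |v i| = δ := hiT.2
            rw [ht1] at hsplit
            simp only [Nat.cast_one, one_mul] at hsplit
            have hvj : |v j| = 1 - δ := by linarith
            have hij : i ≠ j := by
              intro h
              rw [h, hvj] at hvi
              linarith
            apply hnot i j (decide (0 ≤ v i)) (decide (0 ≤ v j)) hij
            funext k
            by_cases hki : k = i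
            · subst hki
              rw [vtx_apply_i]
              rcases le_or_gt 0 (v k) with h | h
              · rw [abs_of_nonneg h] at hvi
                rw [decide_eq_true (p := 0 ≤ v k) h]
                simp only [sg, if_true]
                linarith
              · rw [abs_of_neg h] at hvi
                rw [decide_eq_false (not_le.2 h)]
                simp only [sg, Bool.false_eq_true, if_false]
                linarith
            · by_cases hkj : k = j
              · subst hkj
                rw [vtx_apply_j δ hij]
                rcases le_or_gt 0 (v k) with h | h
                · rw [abs_of_nonneg h] at hvj
                  rw [decide_eq_true (p := 0 ≤ v k) h]
                  simp only [sg, if_true]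
                  linarith
                · rw [abs_of_neg h] at hvj
                  rw [decide_eq_false (not_le.2 h)]
                  simp only [sg, Bool.false_eq_true, if_false]
                  linarith
              · rw [vtx_apply_other δ hki hkj]
                have hkT : k ∉ T := by rw [hTi]; simp [hki]
                have hkM : k ∉ M := by rw [hMj]; simp [hkj]
                rw [hT, Finset.mem_filter] at hkT
                rw [hM, Finset.mem_filter] at hkM
                simp only [Finset.mem_univ, true_and, not_and, not_lt] at hkT hkM
                have hlt : |v k| < δ := lt_of_le_of_ne (hbox k) hkT
                by_cases h0 : 0 < |v k|
                · linarith [hkM h0]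
                · have : |v k| = 0 := le_antisymm (not_lt.1 h0) (abs_nonneg _)
                  exact abs_eq_zero.1 this
        · have h2 : (2:ℝ) ≤ (T.card : ℝ) := by exact_mod_cast ht
          nlinarith

lemma vtx_inj (δ : ℝ) (hδ₁ : 1/2 < δ) (hδ₂ : δ < 1) {i j i' j' : Fin n}
    (hij : i ≠ j) (hij' : i' ≠ j') {s t s' t' : Bool}
    (heq : vtx n δ i j s t = vtx n δ i' j' s' t') :
    i = i' ∧ j = j' ∧ s = s' ∧ t = t' := by
  have hδ0 : 0 < δ := by linarith
  have habs : ∀ k, |vtx n δ i j s t k| = |vtx n δ i' j' s' t' k| := fun k => by rw [heq]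
  have hii : i = i' := by
    by_contra h
    have h1 : |vtx n δ i j s t i| = δ := abs_vtx_i δ hδ0 i j s t
    rw [habs i] at h1
    by_cases h2 : i = j'
    · subst h2
      rw [abs_vtx_j δ hδ₂ hij'] at h1
      linarith
    · rw [vtx_apply_other δ h h2, abs_zero] at h1
      linarith
  subst hii
  have hjj : j = j' := by
    by_contra h
    have h1 : |vtx n δ i j s t j| = 1 - δ := abs_vtx_j δ hδ₂ hij s t
    rw [habs j] at h1
    rw [vtx_apply_other δ (Ne.symm hij) h, abs_zero] at h1
    linarith
  subst hjj
  have hi := congrFun heq i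
  rw [vtx_apply_i, vtx_apply_i] at hi
  have hj := congrFun heq j
  rw [vtx_apply_j δ hij, vtx_apply_j δ hij] at hj
  refine ⟨rfl, rfl, ?_, ?_⟩
  · rcases s <;> rcases s' <;> simp [sg] at hi ⊢ <;> linarith
  · rcases t <;> rcases t' <;> simp [sg] at hj ⊢ <;> linarith

lemma vertex_mem_poly {P : Set (Fin n → ℝ)} {v : Fin n → ℝ} (h : IsVertex P v) : v ∈ P := by
  rcases h with hF | ⟨c, s, -, -, hFe⟩
  · rw [← hF]; rfl
  · have : v ∈ ({v} : Set (Fin n → ℝ)) := rfl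
    rw [hFe] at this
    exact this.1

lemma vertex_set_eq (hn : 2 ≤ n) (δ : ℝ) (hδ₁ : 1/2 < δ) (hδ₂ : δ < 1) :
    {v | IsVertex (polySet (0 : Matrix (Fin 0) (Fin n) ℝ) 0 (cropB n) (cropd n δ)) v} =
      Set.range (fun q : {p : Fin n × Fin n // p.1 ≠ p.2} × Bool × Bool =>
        vtx n δ q.1.1.1 q.1.1.2 q.2.1 q.2.2) := by
  ext v
  simp only [Set.mem_setOf_eq, Set.mem_range]
  constructor
  · intro hV
    have hvP := vertex_mem_poly hV
    by_contra hno
    push_neg at hno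
    have hnot : ∀ (i j : Fin n) (s t : Bool), i ≠ j → v ≠ vtx n δ i j s t := by
      intro i j s t hij hvv
      exact hno ⟨⟨(i, j), hij⟩, s, t⟩ hvv.symm
    obtain ⟨d, hd, h1, h2⟩ := classify hn δ hδ₁ hδ₂ v hvP hnot
    exact not_vertex_of_perturb hd h1 h2 hV
  · rintro ⟨⟨⟨⟨i, j⟩, hij⟩, s, t⟩, rfl⟩
    exact special_is_vertex δ hδ₁ hδ₂ hij s t

lemma vertex_count (hn : 2 ≤ n) (δ : ℝ) (hδ₁ : 1/2 < δ) (hδ₂ : δ < 1) :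
    {v | IsVertex (polySet (0 : Matrix (Fin 0) (Fin n) ℝ) 0 (cropB n) (cropd n δ)) v}.ncard =
      4 * n * (n - 1) := by
  rw [vertex_set_eq hn δ hδ₁ hδ₂]
  have hinj : Function.Injective
      (fun q : {p : Fin n × Fin n // p.1 ≠ p.2} × Bool × Bool =>
        vtx n δ q.1.1.1 q.1.1.2 q.2.1 q.2.2) := by
    rintro ⟨⟨⟨i, j⟩, hij⟩, s, t⟩ ⟨⟨⟨i', j'⟩, hij'⟩, s', t'⟩ h
    obtain ⟨h1, h2, h3, h4⟩ := vtx_inj δ hδ₁ hδ₂ hij hij' h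
    subst h1; subst h2; subst h3; subst h4; rfl
  rw [← Set.image_univ, Set.ncard_image_of_injective _ hinj, Set.ncard_univ]
  rw [Nat.card_eq_fintype_card]
  rw [Fintype.card_prod, Fintype.card_prod, Fintype.card_bool]
  have hsub : Fintype.card {p : Fin n × Fin n // p.1 ≠ p.2} = n * n - n := by
    rw [Fintype.card_subtype_compl]
    have hdiag : Fintype.card {p : Fin n × Fin n // p.1 = p.2} = n := by
      have e : {p : Fin n × Fin n // p.1 = p.2} ≃ Fin n :=
        ⟨fun p => p.1.1, fun a => ⟨(a, a), rfl⟩,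
         fun p => by rcases p with ⟨⟨a, b⟩, h⟩; simp at h; subst h; rfl,
         fun a => rfl⟩
      rw [Fintype.card_congr e, Fintype.card_fin]
    rw [hdiag, Fintype.card_prod, Fintype.card_fin]
  rw [hsub]
  obtain ⟨k, rfl⟩ : ∃ k, n = k + 1 := ⟨n - 1, by omega⟩
  have h1 : (k+1) * (k+1) - (k+1) = (k+1) * k := by
    have : (k+1) * (k+1) = (k+1) * k + (k+1) := by ring
    rw [this, Nat.add_sub_cancel]
  rw [h1]
  have h2 : k + 1 - 1 = k := by omega
  rw [h2]
  ring

lemma basic_sol (n : ℕ) (δ : ℝ) (x : Fin n → ℝ)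
    (hx : ∀ i, x i = δ ∨ x i = -δ) :
    IsBasicSolution (0 : Matrix (Fin 0) (Fin n) ℝ) 0 (cropB n) (cropd n δ) x := by
  constructor
  · simp [Matrix.zero_mulVec]
  · rw [eq_top_iff]
    intro v _
    have hv : v = ∑ k, (v k) • (Pi.single k 1 : Fin n → ℝ) := by
      funext j
      rw [Finset.sum_apply]
      simp [Pi.single_apply]
    rw [hv]
    apply Submodule.sum_mem
    intro k _
    apply Submodule.smul_mem
    rcases hx k with h | h
    · apply Submodule.subset_span
      right
      refine ⟨Sum.inr (Sum.inl k), ?_, ?_⟩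
      · show (cropB n).mulVec x _ = cropd n δ _
        rw [cropB_inr₁, h]; rfl
      · funext j
        simp [cropB, Pi.single_apply]
    · -- -e_k row is tight; need Pi.single k 1 = -(row)
      have hmem : (fun i => cropB n i) (Sum.inr (Sum.inr k)) ∈
          (fun i => cropB n i) '' {i | (cropB n).mulVec x i = cropd n δ i} := by
        refine ⟨Sum.inr (Sum.inr k), ?_, rfl⟩
        show (cropB n).mulVec x _ = cropd n δ _
        rw [cropB_inr₂, h]; simp [cropd]
      have heq : (Pi.single k 1 : Fin n → ℝ) = -((fun i => cropB n i) (Sum.inr (Sum.inr k))) := by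
        funext j
        simp only [cropB, Matrix.of_apply, Sum.elim_inr, Pi.neg_apply, Pi.single_apply]
        split <;> ring
      rw [heq]
      exact Submodule.neg_mem _ (Submodule.subset_span (Or.inr hmem))

end

/-- For `n ≥ 2` and `δ ∈ (1/2, 1)`, the cropped cross-polytope
`Q'_n = Qₙ ∩ [-δ,δ]ⁿ` has exactly `4n(n-1)` vertices, and every point of `{-δ,δ}ⁿ` is a basic
solution of its defining system. -/
theorem stmt_12 (n : ℕ) (hn : 2 ≤ n) (δ : ℝ) (hδ₁ : 1 / 2 < δ) (hδ₂ : δ < 1) :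
    {v | IsVertex
        (polySet (0 : Matrix (Fin 0) (Fin n) ℝ) 0 (cropB n) (cropd n δ)) v}.ncard =
      4 * n * (n - 1) ∧
    ∀ x : Fin n → ℝ, (∀ i, x i = δ ∨ x i = -δ) →
      IsBasicSolution (0 : Matrix (Fin 0) (Fin n) ℝ) 0 (cropB n) (cropd n δ) x := by
  refine ⟨vertex_count hn δ hδ₁ hδ₂, fun x hx => basic_sol n δ x hx⟩
end
end
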